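/- arXiv:2003.06511 — 9 statements merged into one kernel-verified Lean document; each statement's English description precedes it below -/
import Mathlib

section
/- For every nonempty finite set 𝒳, every θ ∈ (0,1/2), every r > 0 and all full-support probability distributions P1 ≠ P2 on 𝒳, the function G_min is strictly increasing on [0,(1−2θ)/2). Moreover G_min(0) = 0. -/
namespace StmtNS

variable {X : Type*} [Fintype X]

/-- `P` is a probability distribution on the finite set `X`. -/
def IsProbDist (P : X → ℝ) : Prop := (∀ x, 0 ≤ P x) ∧ (∑ x, P x) = 1

/-- Kullback–Leibler divergence `D(P‖Q) = ∑_{x : P(x) > 0} P(x) log (P(x)/Q(x))`. -/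
noncomputable def KL (P Q : X → ℝ) : ℝ :=
  ∑ x, if 0 < P x then P x * Real.log (P x / Q x) else 0

/-- Generalized Jensen–Shannon divergence. -/
noncomputable def GJS (Q Qt : X → ℝ) (a : ℝ) : ℝ :=
  a * KL Q (fun x => (a * Q x + Qt x) / (a + 1)) +
    KL Qt (fun x => (a * Q x + Qt x) / (a + 1))

/-- The function `G_min`. -/
noncomputable def Gmin (P1 P2 : X → ℝ) (r θ Δ : ℝ) : ℝ :=
  min (r * GJS (fun x => (Δ * P1 x + (1 - θ - Δ) * P2 x) / (1 - θ)) P2 ((1 - θ) / r))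
      (r * GJS (fun x => ((1 - θ - Δ) * P1 x + Δ * P2 x) / (1 - θ)) P1 ((1 - θ) / r))

/-! ### Auxiliary definitions for the proof -/

/-- The mixture `(Δ B + (c-Δ) A)/c`. -/
noncomputable def qf (A B : X → ℝ) (c Δ : ℝ) (x : X) : ℝ := (Δ * B x + (c - Δ) * A x) / c

/-- The midpoint distribution `(a q + A)/(a+1)`. -/
noncomputable def mf (A B : X → ℝ) (c a Δ : ℝ) (x : X) : ℝ :=
  (a * qf A B c Δ x + A x) / (a + 1)

/-- Smooth form of `r * GJS (qf A B c Δ) A a`. -/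
noncomputable def Gf (A B : X → ℝ) (r c a Δ : ℝ) : ℝ :=
  r * ∑ x, (a * (qf A B c Δ x * (Real.log (qf A B c Δ x) - Real.log (mf A B c a Δ x))) +
    A x * (Real.log (A x) - Real.log (mf A B c a Δ x)))

/-- First derivative of `Gf` in `Δ`. -/
noncomputable def G1f (A B : X → ℝ) (r c a Δ : ℝ) : ℝ :=
  r * ∑ x, a * ((B x - A x) / c) * (Real.log (qf A B c Δ x) - Real.log (mf A B c a Δ x))

/-- Second derivative of `Gf` in `Δ`. -/
noncomputable def G2f (A B : X → ℝ) (r c a Δ : ℝ) : ℝ :=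
  r * ∑ x, a * ((B x - A x) / c) ^ 2 *
    (1 / qf A B c Δ x - (a / (a + 1)) / mf A B c a Δ x)

lemma qf_hasDerivAt (A B : X → ℝ) (c Δ : ℝ) (x : X) :
    HasDerivAt (fun Δ => qf A B c Δ x) ((B x - A x) / c) Δ := by
  have h : HasDerivAt (fun Δ : ℝ => Δ * B x + (c - Δ) * A x) (B x - A x) Δ := by
    have := ((hasDerivAt_id Δ).mul_const (B x)).add
      (((hasDerivAt_const Δ c).sub (hasDerivAt_id Δ)).mul_const (A x))
    exact this.congr_deriv (by ring)
  exact h.div_const c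

lemma mf_hasDerivAt (A B : X → ℝ) (c a Δ : ℝ) (x : X) :
    HasDerivAt (fun Δ => mf A B c a Δ x) (a * ((B x - A x) / c) / (a + 1)) Δ :=
  (((qf_hasDerivAt A B c Δ x).const_mul a).add_const (A x)).div_const (a + 1)

lemma mf_mul (A B : X → ℝ) {a : ℝ} (ha : 0 < a) (c Δ : ℝ) (x : X) :
    mf A B c a Δ x * (a + 1) = a * qf A B c Δ x + A x :=
  div_mul_cancel₀ _ (by positivity)

/-- Gibbs' inequality, nonnegative version. -/
lemma gibbs_nonneg (P M : X → ℝ) (hP : ∀ x, 0 < P x) (hM : ∀ x, 0 < M x)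
    (hsum : ∑ x, P x = ∑ x, M x) :
    0 ≤ ∑ x, P x * (Real.log (P x) - Real.log (M x)) := by
  have key : ∀ x ∈ Finset.univ, P x - M x ≤ P x * (Real.log (P x) - Real.log (M x)) := by
    intro x _
    have h1 : Real.log (M x / P x) ≤ M x / P x - 1 :=
      Real.log_le_sub_one_of_pos (div_pos (hM x) (hP x))
    rw [Real.log_div (hM x).ne' (hP x).ne'] at h1
    have h2 := mul_le_mul_of_nonneg_left h1 (hP x).le
    have h3 : P x * (M x / P x) = M x := by
      rw [mul_comm]; exact div_mul_cancel₀ _ (hP x).ne'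
    nlinarith
  have := Finset.sum_le_sum key
  have hz : ∑ x, (P x - M x) = 0 := by
    rw [Finset.sum_sub_distrib, hsum, sub_self]
  linarith [hz ▸ this]

/-- Gibbs' inequality, strict version. -/
lemma gibbs_pos (P M : X → ℝ) (hP : ∀ x, 0 < P x) (hM : ∀ x, 0 < M x)
    (hsum : ∑ x, P x = ∑ x, M x) (hne : ∃ x, P x ≠ M x) :
    0 < ∑ x, P x * (Real.log (P x) - Real.log (M x)) := by
  have key : ∀ x ∈ Finset.univ, P x - M x ≤ P x * (Real.log (P x) - Real.log (M x)) := by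
    intro x _
    have h1 : Real.log (M x / P x) ≤ M x / P x - 1 :=
      Real.log_le_sub_one_of_pos (div_pos (hM x) (hP x))
    rw [Real.log_div (hM x).ne' (hP x).ne'] at h1
    have h2 := mul_le_mul_of_nonneg_left h1 (hP x).le
    have h3 : P x * (M x / P x) = M x := by
      rw [mul_comm]; exact div_mul_cancel₀ _ (hP x).ne'
    nlinarith
  obtain ⟨x0, hx0⟩ := hne
  have keystrict : ∃ x ∈ Finset.univ, P x - M x < P x * (Real.log (P x) - Real.log (M x)) := by
    refine ⟨x0, Finset.mem_univ _, ?_⟩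
    have hne1 : M x0 / P x0 ≠ 1 := by
      intro h
      rw [div_eq_one_iff_eq (hP x0).ne'] at h
      exact hx0 h.symm
    have h1 : Real.log (M x0 / P x0) < M x0 / P x0 - 1 :=
      Real.log_lt_sub_one_of_pos (div_pos (hM x0) (hP x0)) hne1
    rw [Real.log_div (hM x0).ne' (hP x0).ne'] at h1
    have h2 := mul_lt_mul_of_pos_left h1 (hP x0)
    have h3 : P x0 * (M x0 / P x0) = M x0 := by
      rw [mul_comm]; exact div_mul_cancel₀ _ (hP x0).ne'
    nlinarith
  have := Finset.sum_lt_sum key keystrict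
  have hz : ∑ x, (P x - M x) = 0 := by
    rw [Finset.sum_sub_distrib, hsum, sub_self]
  linarith [hz ▸ this]

lemma Gf_hasDerivAt (A B : X → ℝ) {r c a Δ : ℝ} (hr : 0 < r) (hc : 0 < c) (ha : 0 < a)
    (hq : ∀ x, 0 < qf A B c Δ x) (hm : ∀ x, 0 < mf A B c a Δ x) :
    HasDerivAt (fun Δ => Gf A B r c a Δ) (G1f A B r c a Δ) Δ := by
  unfold Gf G1f
  refine HasDerivAt.const_mul r (HasDerivAt.fun_sum fun x _ => ?_)
  set k := (B x - A x) / c with hk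
  have hq' := qf_hasDerivAt A B c Δ x
  have hm' := mf_hasDerivAt A B c a Δ x
  rw [← hk] at hq' hm'
  have hlq : HasDerivAt (fun Δ => Real.log (qf A B c Δ x)) (k / qf A B c Δ x) Δ :=
    hq'.log (hq x).ne'
  have hlm : HasDerivAt (fun Δ => Real.log (mf A B c a Δ x))
      (a * k / (a + 1) / mf A B c a Δ x) Δ := hm'.log (hm x).ne'
  have h1 := hq'.mul (hlq.sub hlm)
  have h2 := ((hasDerivAt_const Δ (Real.log (A x))).sub hlm).const_mul (A x)
  have h := (h1.const_mul a).add h2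
  refine h.congr_deriv (Eq.symm ?_)
  simp only [Pi.sub_apply]
  have hmm := mf_mul A B ha c Δ x
  have hqne := (hq x).ne'
  have hmne := (hm x).ne'
  have ha1 : a + 1 ≠ 0 := by positivity
  set q := qf A B c Δ x with hq_def
  set m := mf A B c a Δ x with hm_def
  set L := Real.log q - Real.log m with hL
  set w := a * k / (a + 1) / m with hw
  have e2 : (a * q + A x) * w = a * k := by
    rw [← hmm, hw]
    field_simp
  have hd : q * (k / q - w) = k - q * w := by
    rw [mul_sub, mul_div_cancel₀ _ hqne]
  rw [hd]
  linear_combination e2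

lemma G1f_hasDerivAt (A B : X → ℝ) {r c a Δ : ℝ} (hr : 0 < r) (hc : 0 < c) (ha : 0 < a)
    (hq : ∀ x, 0 < qf A B c Δ x) (hm : ∀ x, 0 < mf A B c a Δ x) :
    HasDerivAt (fun Δ => G1f A B r c a Δ) (G2f A B r c a Δ) Δ := by
  unfold G1f G2f
  refine HasDerivAt.const_mul r (HasDerivAt.fun_sum fun x _ => ?_)
  set k := (B x - A x) / c with hk
  have hq' := qf_hasDerivAt A B c Δ x
  have hm' := mf_hasDerivAt A B c a Δ x
  rw [← hk] at hq' hm'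
  have hlq : HasDerivAt (fun Δ => Real.log (qf A B c Δ x)) (k / qf A B c Δ x) Δ :=
    hq'.log (hq x).ne'
  have hlm : HasDerivAt (fun Δ => Real.log (mf A B c a Δ x))
      (a * k / (a + 1) / mf A B c a Δ x) Δ := hm'.log (hm x).ne'
  have h := (hlq.sub hlm).const_mul (a * k)
  refine h.congr_deriv (Eq.symm ?_)
  have hqne := (hq x).ne'
  have hmne := (hm x).ne'
  have ha1 : a + 1 ≠ 0 := by positivity
  field_simp

/-- Main auxiliary lemma: the branch function is strictly increasing and zero at `0`. -/
lemma phi_aux (A B : X → ℝ)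
    (hApos : ∀ x, 0 < A x) (hBpos : ∀ x, 0 < B x)
    (hAsum : ∑ x, A x = 1) (hBsum : ∑ x, B x = 1)
    (hAB : ∃ x, A x ≠ B x)
    {r c b : ℝ} (hr : 0 < r) (hc : 0 < c) (hb : 0 < b) (hbc : b < c) :
    StrictMonoOn (fun Δ => r * GJS (fun x => (Δ * B x + (c - Δ) * A x) / c) A (c / r))
      (Set.Icc 0 b) ∧
    r * GJS (fun x => ((0:ℝ) * B x + (c - 0) * A x) / c) A (c / r) = 0 := by
  set a := c / r with ha_def
  have ha : 0 < a := div_pos hc hr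
  have ha1 : (0:ℝ) < a + 1 := by positivity
  -- positivity of q on [0, c]
  have hq : ∀ Δ, 0 ≤ Δ → Δ ≤ c → ∀ x, 0 < qf A B c Δ x := by
    intro Δ h0 h1 x
    unfold qf
    rcases eq_or_lt_of_le h0 with h | h
    · have : Δ * B x + (c - Δ) * A x = c * A x := by rw [← h]; ring
      rw [this]
      exact div_pos (mul_pos hc (hApos x)) hc
    · have hBB : 0 < Δ * B x := mul_pos h (hBpos x)
      have hAA : 0 ≤ (c - Δ) * A x := mul_nonneg (by linarith) (hApos x).le
      exact div_pos (by linarith) hc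
  have hm : ∀ Δ, 0 ≤ Δ → Δ ≤ c → ∀ x, 0 < mf A B c a Δ x := by
    intro Δ h0 h1 x
    unfold mf
    have hqx := hq Δ h0 h1 x
    have h2 : 0 < a * qf A B c Δ x + A x := by nlinarith [hApos x, mul_pos ha hqx]
    exact div_pos h2 ha1
  -- sums
  have hsumq : ∀ Δ, ∑ x, qf A B c Δ x = 1 := by
    intro Δ
    unfold qf
    rw [← Finset.sum_div, Finset.sum_add_distrib, ← Finset.mul_sum, ← Finset.mul_sum,
      hAsum, hBsum]
    field_simp
    ring
  have hsumm : ∀ Δ, ∑ x, mf A B c a Δ x = 1 := by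
    intro Δ
    unfold mf
    rw [← Finset.sum_div, Finset.sum_add_distrib, ← Finset.mul_sum, hsumq Δ, hAsum]
    field_simp
  -- equality of GJS-form and smooth form on positivity region
  have hGeq : ∀ Δ, 0 ≤ Δ → Δ ≤ c →
      r * GJS (fun x => (Δ * B x + (c - Δ) * A x) / c) A a = Gf A B r c a Δ := by
    intro Δ h0 h1
    have hqpos := hq Δ h0 h1
    have hmpos := hm Δ h0 h1
    simp only [GJS, KL, Gf]
    have e1 : ∀ x ∈ Finset.univ,
        (if 0 < (Δ * B x + (c - Δ) * A x) / c then
          (Δ * B x + (c - Δ) * A x) / c *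
            Real.log ((Δ * B x + (c - Δ) * A x) / c /
              ((a * ((Δ * B x + (c - Δ) * A x) / c) + A x) / (a + 1))) else 0)
        = qf A B c Δ x * (Real.log (qf A B c Δ x) - Real.log (mf A B c a Δ x)) := by
      intro x _
      have hqx : 0 < (Δ * B x + (c - Δ) * A x) / c := hqpos x
      have hmx : 0 < (a * ((Δ * B x + (c - Δ) * A x) / c) + A x) / (a + 1) := hmpos x
      rw [if_pos hqx, Real.log_div hqx.ne' hmx.ne']
      rfl
    have e2 : ∀ x ∈ Finset.univ,
        (if 0 < A x then
          A x * Real.log (A x / ((a * ((Δ * B x + (c - Δ) * A x) / c) + A x) / (a + 1))) else 0)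
        = A x * (Real.log (A x) - Real.log (mf A B c a Δ x)) := by
      intro x _
      have hmx : 0 < (a * ((Δ * B x + (c - Δ) * A x) / c) + A x) / (a + 1) := hmpos x
      rw [if_pos (hApos x), Real.log_div (hApos x).ne' hmx.ne']
      rfl
    rw [Finset.sum_congr rfl e1, Finset.sum_congr rfl e2, Finset.sum_add_distrib,
      ← Finset.mul_sum]
  -- Gf 0 = 0
  have hq0 : ∀ x, qf A B c 0 x = A x := by
    intro x
    unfold qf
    rw [zero_mul, zero_add, sub_zero, mul_comm, mul_div_assoc, div_self hc.ne', mul_one]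
  have hm0 : ∀ x, mf A B c a 0 x = A x := by
    intro x
    unfold mf
    rw [hq0]
    have : a * A x + A x = A x * (a + 1) := by ring
    rw [this, mul_div_assoc, div_self ha1.ne', mul_one]
  have hGf0 : Gf A B r c a 0 = 0 := by
    unfold Gf
    have : ∀ x ∈ Finset.univ,
        (a * (qf A B c 0 x * (Real.log (qf A B c 0 x) - Real.log (mf A B c a 0 x))) +
          A x * (Real.log (A x) - Real.log (mf A B c a 0 x))) = 0 := by
      intro x _
      simp [hq0, hm0]
    rw [Finset.sum_congr rfl this, Finset.sum_const, smul_zero, mul_zero]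
  -- Gf positive for Δ ∈ (0, c)
  have hGfpos : ∀ Δ, 0 < Δ → Δ ≤ b → 0 < Gf A B r c a Δ := by
    intro Δ h0 h1
    have h1c : Δ ≤ c := le_of_lt (lt_of_le_of_lt h1 hbc)
    have hqpos := hq Δ h0.le h1c
    have hmpos := hm Δ h0.le h1c
    have hS1 : 0 < ∑ x, qf A B c Δ x * (Real.log (qf A B c Δ x) - Real.log (mf A B c a Δ x)) := by
      apply gibbs_pos _ _ hqpos hmpos (by rw [hsumq, hsumm])
      obtain ⟨x0, hx0⟩ := hAB
      refine ⟨x0, fun heq => ?_⟩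
      have hmm := mf_mul A B ha c Δ x0
      rw [← heq] at hmm
      have hqA : qf A B c Δ x0 = A x0 := by linear_combination hmm
      have hqA' : (Δ * B x0 + (c - Δ) * A x0) / c = A x0 := hqA
      have h5 := (div_eq_iff hc.ne').mp hqA'
      have h6 : Δ * B x0 = Δ * A x0 := by linear_combination h5
      exact hx0 (mul_left_cancel₀ h0.ne' h6).symm
    have hS2 : 0 ≤ ∑ x, A x * (Real.log (A x) - Real.log (mf A B c a Δ x)) :=
      gibbs_nonneg _ _ hApos hmpos (by rw [hAsum, hsumm])
    unfold Gf
    rw [Finset.sum_add_distrib, ← Finset.mul_sum]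
    have : 0 < a * ∑ x, qf A B c Δ x * (Real.log (qf A B c Δ x) - Real.log (mf A B c a Δ x)) :=
      mul_pos ha hS1
    nlinarith
  -- G2f positive on (0, c)
  have hG2pos : ∀ Δ, 0 < Δ → Δ < c → 0 < G2f A B r c a Δ := by
    intro Δ h0 h1
    have hqpos := hq Δ h0.le h1.le
    have hmpos := hm Δ h0.le h1.le
    have hbracket : ∀ x, 0 < 1 / qf A B c Δ x - (a / (a + 1)) / mf A B c a Δ x := by
      intro x
      have hmm := mf_mul A B ha c Δ x
      have e : (a / (a + 1)) / mf A B c a Δ x = a / (a * qf A B c Δ x + A x) := by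
        rw [div_div, ← hmm]; ring_nf
      rw [e, sub_pos]
      rw [div_lt_div_iff₀ (by nlinarith [hqpos x, hApos x, mul_pos ha (hqpos x)]) (hqpos x)]
      nlinarith [hApos x, mul_pos ha (hqpos x)]
    unfold G2f
    apply mul_pos hr
    apply Finset.sum_pos'
    · intro x _
      exact mul_nonneg (mul_nonneg ha.le (sq_nonneg _)) (hbracket x).le
    · obtain ⟨x0, hx0⟩ := hAB
      refine ⟨x0, Finset.mem_univ _, ?_⟩
      have hk : (B x0 - A x0) / c ≠ 0 := by
        apply div_ne_zero _ hc.ne'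
        exact sub_ne_zero_of_ne fun h => hx0 h.symm
      have hk2 : 0 < ((B x0 - A x0) / c) ^ 2 :=
        (Ne.symm (pow_ne_zero 2 hk)).lt_of_le (sq_nonneg _)
      exact mul_pos (mul_pos ha hk2) (hbracket x0)
  -- strict convexity of Gf on [0, b]
  have hconv : StrictConvexOn ℝ (Set.Icc 0 b) (fun Δ => Gf A B r c a Δ) := by
    apply strictConvexOn_of_deriv2_pos (convex_Icc 0 b)
    · intro Δ hΔ
      have hqpos := hq Δ hΔ.1 (le_trans hΔ.2 hbc.le)
      have hmpos := hm Δ hΔ.1 (le_trans hΔ.2 hbc.le)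
      exact ((Gf_hasDerivAt A B hr hc ha hqpos hmpos).differentiableAt.continuousAt).continuousWithinAt
    · intro Δ hΔ
      rw [interior_Icc] at hΔ
      have hΔc : Δ ∈ Set.Ioo (0:ℝ) c := ⟨hΔ.1, lt_trans hΔ.2 hbc⟩
      have hev : (deriv fun Δ => Gf A B r c a Δ) =ᶠ[nhds Δ] (fun Δ => G1f A B r c a Δ) := by
        filter_upwards [isOpen_Ioo.mem_nhds hΔc] with y hy
        exact (Gf_hasDerivAt A B hr hc ha (hq y hy.1.le hy.2.le) (hm y hy.1.le hy.2.le)).deriv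
      have : deriv^[2] (fun Δ => Gf A B r c a Δ) Δ =
          deriv (deriv fun Δ => Gf A B r c a Δ) Δ := rfl
      rw [this, hev.deriv_eq,
        (G1f_hasDerivAt A B hr hc ha (hq Δ hΔc.1.le hΔc.2.le) (hm Δ hΔc.1.le hΔc.2.le)).deriv]
      exact hG2pos Δ hΔc.1 hΔc.2
  -- strict monotonicity of Gf on [0, b]
  have hmono : StrictMonoOn (fun Δ => Gf A B r c a Δ) (Set.Icc 0 b) := by
    intro x hx y hy hxy
    show Gf A B r c a x < Gf A B r c a y
    rcases eq_or_lt_of_le hx.1 with h | h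
    · rw [← h, hGf0]
      exact hGfpos y (h ▸ hxy) hy.2
    · -- 0 < x < y
      have hy0 : 0 < y := lt_trans h hxy
      have ht : x / y ∈ Set.Ioo (0:ℝ) 1 := ⟨div_pos h hy0, (div_lt_one hy0).mpr hxy⟩
      have h0mem : (0:ℝ) ∈ Set.Icc (0:ℝ) b := ⟨le_refl _, hb.le⟩
      have hne : (0:ℝ) ≠ y := hy0.ne
      have key := hconv.2 h0mem hy hne (by linarith [ht.2] : 0 < 1 - x / y) ht.1 (by ring)
      simp only [] at key
      have harg : (1 - x / y) • (0:ℝ) + (x / y) • y = x := by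
        rw [smul_eq_mul, smul_eq_mul, mul_zero, zero_add, div_mul_cancel₀ _ hy0.ne']
      rw [harg] at key
      have hGy : 0 < Gf A B r c a y := hGfpos y hy0 hy.2
      have : (1 - x / y) • Gf A B r c a 0 + (x / y) • Gf A B r c a y
          = (x / y) * Gf A B r c a y := by
        rw [hGf0]; simp [smul_eq_mul]
      rw [this] at key
      calc Gf A B r c a x < (x / y) * Gf A B r c a y := key
        _ < Gf A B r c a y := by nlinarith [ht.2]
  constructor
  · intro x hx y hy hxy
    have ex := hGeq x hx.1 (le_trans hx.2 hbc.le)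
    have ey := hGeq y hy.1 (le_trans hy.2 hbc.le)
    have h := hmono hx hy hxy
    simp only [] at h
    rw [← ex, ← ey] at h
    exact h
  · rw [hGeq 0 le_rfl hc.le, hGf0]

/-- `G_min` is strictly increasing on `[0, (1−2θ)/2)` and `G_min(0) = 0`. -/
theorem Gmin_strictMonoOn_and_zero [Nonempty X]
    (P1 P2 : X → ℝ) (hP1 : IsProbDist P1) (hP2 : IsProbDist P2)
    (hP1pos : ∀ x, 0 < P1 x) (hP2pos : ∀ x, 0 < P2 x) (hne : P1 ≠ P2)
    {r θ : ℝ} (hr : 0 < r) (hθ : θ ∈ Set.Ioo (0 : ℝ) (1 / 2)) :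
    StrictMonoOn (Gmin P1 P2 r θ) (Set.Ico (0 : ℝ) ((1 - 2 * θ) / 2)) ∧
      Gmin P1 P2 r θ 0 = 0 := by
  obtain ⟨hθ0, hθ1⟩ := hθ
  set c := 1 - θ with hc_def
  set b := (1 - 2 * θ) / 2 with hb_def
  have hc : 0 < c := by rw [hc_def]; linarith
  have hb : 0 < b := by rw [hb_def]; linarith
  have hbc : b < c := by rw [hb_def, hc_def]; linarith
  obtain ⟨hx12, hx21⟩ : (∃ x, P2 x ≠ P1 x) ∧ (∃ x, P1 x ≠ P2 x) := by
    have : ∃ x, P1 x ≠ P2 x := Function.ne_iff.mp hne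
    obtain ⟨x, hx⟩ := this
    exact ⟨⟨x, fun h => hx h.symm⟩, ⟨x, hx⟩⟩
  have H1 := phi_aux P2 P1 hP2pos hP1pos hP2.2 hP1.2 hx12 hr hc hb hbc
  have H2 := phi_aux P1 P2 hP1pos hP2pos hP1.2 hP2.2 hx21 hr hc hb hbc
  -- rewrite Gmin in terms of the two branch functions
  have hGmin : ∀ Δ, Gmin P1 P2 r θ Δ =
      min (r * GJS (fun x => (Δ * P1 x + (c - Δ) * P2 x) / c) P2 (c / r))
          (r * GJS (fun x => (Δ * P2 x + (c - Δ) * P1 x) / c) P1 (c / r)) := by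
    intro Δ
    unfold Gmin
    rw [← hc_def]
    have hl : (fun x => ((c - Δ) * P1 x + Δ * P2 x) / c)
        = (fun x => (Δ * P2 x + (c - Δ) * P1 x) / c) := by
      funext x; ring_nf
    rw [hl]
  constructor
  · intro x hx y hy hxy
    have hx' : x ∈ Set.Icc (0:ℝ) b := ⟨hx.1, hx.2.le⟩
    have hy' : y ∈ Set.Icc (0:ℝ) b := ⟨hy.1, hy.2.le⟩
    rw [hGmin x, hGmin y]
    exact lt_min
      ((min_le_left _ _).trans_lt (H1.1 hx' hy' hxy))
      ((min_le_right _ _).trans_lt (H2.1 hx' hy' hxy))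
  · rw [hGmin 0]
    rw [H1.2, H2.2, min_self]

end StmtNS
end

section
/- Fix a nonempty finite set 𝒳, full-support probability distributions P1 ≠ P2 on 𝒳, r > 0, θ ∈ (0,1/2) and ζ ∈ (0,1−2θ). Then the function g2(α) = GJS( (α·P1 + ζ·P2)/(α+ζ), P1, (α+ζ)/r ) is monotonically nonincreasing in α on the interval [θ, 1−θ−ζ]. -/
namespace StmtNS

variable {X : Type*} [Fintype X]

lemma KL_eq {P Q : X → ℝ} (hP : ∀ x, 0 < P x) (hQ : ∀ x, 0 < Q x) :
    KL P Q = ∑ x, P x * (Real.log (P x) - Real.log (Q x)) := by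
  unfold KL
  refine Finset.sum_congr rfl fun x _ => ?_
  rw [if_pos (hP x), Real.log_div (hP x).ne' (hQ x).ne']

lemma gibbs {A B : X → ℝ} (hA : ∀ x, 0 < A x) (hB : ∀ x, 0 < B x)
    (hAs : ∑ x, A x = 1) (hBs : ∑ x, B x = 1) :
    0 ≤ ∑ x, A x * (Real.log (A x) - Real.log (B x)) := by
  have h : ∑ x, A x * (Real.log (B x) - Real.log (A x)) ≤ 0 := by
    calc ∑ x, A x * (Real.log (B x) - Real.log (A x))
        ≤ ∑ x, A x * (B x / A x - 1) := by
          refine Finset.sum_le_sum fun x _ => ?_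
          have hlog := Real.log_le_sub_one_of_pos (div_pos (hB x) (hA x))
          rw [Real.log_div (hB x).ne' (hA x).ne'] at hlog
          exact mul_le_mul_of_nonneg_left hlog (hA x).le
      _ = ∑ x, (B x - A x) := by
          refine Finset.sum_congr rfl fun x _ => ?_
          rw [mul_sub, mul_one, mul_div_assoc', mul_div_cancel_left₀ _ (hA x).ne']
      _ = 0 := by rw [Finset.sum_sub_distrib, hAs, hBs, sub_self]
  have h2 : ∑ x, A x * (Real.log (A x) - Real.log (B x))
      = -∑ x, A x * (Real.log (B x) - Real.log (A x)) := by
    rw [← Finset.sum_neg_distrib]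
    exact Finset.sum_congr rfl fun x _ => by ring
  linarith

/-- The mixture `(β P1 + ζ P2)/(β+ζ)`. -/
noncomputable def Mmix (P1 P2 : X → ℝ) (ζ β : ℝ) : X → ℝ :=
  fun x => (β * P1 x + ζ * P2 x) / (β + ζ)

/-- `F β = β D(P1 ‖ M β) + ζ D(P2 ‖ M β)`. -/
noncomputable def Fval (P1 P2 : X → ℝ) (ζ β : ℝ) : ℝ :=
  β * KL P1 (Mmix P1 P2 ζ β) + ζ * KL P2 (Mmix P1 P2 ζ β)

section aux

variable {P1 P2 : X → ℝ} {ζ : ℝ}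
variable (hP1pos : ∀ x, 0 < P1 x) (hP2pos : ∀ x, 0 < P2 x)
variable (hs1 : ∑ x, P1 x = 1) (hs2 : ∑ x, P2 x = 1) (hζ : 0 < ζ)

include hP1pos hP2pos hζ in
lemma Mmix_pos {β : ℝ} (hβ : 0 < β) : ∀ x, 0 < Mmix P1 P2 ζ β x := fun x =>
  div_pos (by nlinarith [hP1pos x, hP2pos x]) (by linarith)

include hs1 hs2 hζ in
lemma Mmix_sum {β : ℝ} (hβ : 0 < β) : ∑ x, Mmix P1 P2 ζ β x = 1 := by
  unfold Mmix
  rw [← Finset.sum_div]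
  have : ∑ x, (β * P1 x + ζ * P2 x) = β + ζ := by
    rw [Finset.sum_add_distrib, ← Finset.mul_sum, ← Finset.mul_sum, hs1, hs2, mul_one, mul_one]
  rw [this, div_self (by linarith)]

include hP1pos hP2pos hs1 hs2 hζ in
/-- Minimality: `F β ≤ β D(P1‖M γ) + ζ D(P2‖M γ)`. -/
lemma minF {β γ : ℝ} (hβ : 0 < β) (hγ : 0 < γ) :
    Fval P1 P2 ζ β ≤ β * KL P1 (Mmix P1 P2 ζ γ) + ζ * KL P2 (Mmix P1 P2 ζ γ) := by
  have hMβ := Mmix_pos hP1pos hP2pos hζ hβ (P2 := P2)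
  have hMγ := Mmix_pos hP1pos hP2pos hζ hγ (P2 := P2)
  have hβζ : β + ζ ≠ 0 := by positivity
  have key : β * KL P1 (Mmix P1 P2 ζ γ) + ζ * KL P2 (Mmix P1 P2 ζ γ) - Fval P1 P2 ζ β
      = (β + ζ) * ∑ x, Mmix P1 P2 ζ β x *
          (Real.log (Mmix P1 P2 ζ β x) - Real.log (Mmix P1 P2 ζ γ x)) := by
    rw [Fval, KL_eq hP1pos hMγ, KL_eq hP2pos hMγ, KL_eq hP1pos hMβ, KL_eq hP2pos hMβ]
    simp only [Finset.mul_sum]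
    rw [← Finset.sum_add_distrib, ← Finset.sum_add_distrib, ← Finset.sum_sub_distrib]
    refine Finset.sum_congr rfl fun x _ => ?_
    have hm : (β + ζ) * Mmix P1 P2 ζ β x = β * P1 x + ζ * P2 x := by
      simp only [Mmix]; field_simp
    linear_combination (Real.log (Mmix P1 P2 ζ γ x) - Real.log (Mmix P1 P2 ζ β x)) * hm
  have hg := gibbs hMβ hMγ (Mmix_sum hs1 hs2 hζ hβ) (Mmix_sum hs1 hs2 hζ hγ)
  have hpr := mul_nonneg (by linarith : (0:ℝ) ≤ β + ζ) hg
  linarith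

include hP1pos hP2pos hζ in
/-- The key identity `r · g2(α) = F(α+r) − F(α)`. -/
lemma g2_identity {α r : ℝ} (hα : 0 < α) (hr : 0 < r) :
    r * GJS (Mmix P1 P2 ζ α) P1 ((α + ζ) / r)
      = Fval P1 P2 ζ (α + r) - Fval P1 P2 ζ α := by
  have hαζ : α + ζ ≠ 0 := by positivity
  have hαr : α + r + ζ ≠ 0 := by positivity
  have hden : (α + ζ) / r + 1 ≠ 0 := by positivity
  have hW : (fun x => ((α + ζ) / r * Mmix P1 P2 ζ α x + P1 x) / ((α + ζ) / r + 1))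
      = Mmix P1 P2 ζ (α + r) := by
    funext x
    simp only [Mmix]
    field_simp
    ring
  have hMα := Mmix_pos hP1pos hP2pos hζ hα (P2 := P2)
  have hMαr := Mmix_pos hP1pos hP2pos hζ (by linarith : (0:ℝ) < α + r) (P2 := P2)
  rw [GJS, hW]
  have hsum : (α + ζ) * KL (Mmix P1 P2 ζ α) (Mmix P1 P2 ζ (α + r))
      + r * KL P1 (Mmix P1 P2 ζ (α + r))
      = Fval P1 P2 ζ (α + r) - Fval P1 P2 ζ α := by
    rw [Fval, Fval, KL_eq hMα hMαr, KL_eq hP1pos hMαr, KL_eq hP2pos hMαr,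
      KL_eq hP1pos hMα, KL_eq hP2pos hMα]
    simp only [Finset.mul_sum]
    rw [← Finset.sum_add_distrib, ← Finset.sum_add_distrib, ← Finset.sum_add_distrib,
      ← Finset.sum_sub_distrib]
    refine Finset.sum_congr rfl fun x _ => ?_
    have hm : (α + ζ) * Mmix P1 P2 ζ α x = α * P1 x + ζ * P2 x := by
      simp only [Mmix]; field_simp
    linear_combination (Real.log (Mmix P1 P2 ζ α x) - Real.log (Mmix P1 P2 ζ (α + r) x)) * hm
  rw [← hsum]
  field_simp

include hP1pos hP2pos hs1 hs2 hζ in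
/-- Concavity three-point inequality for `F`. -/
lemma F_concave_step {β1 β2 β3 t : ℝ} (h1 : 0 < β1) (h2 : 0 < β2) (h3 : 0 < β3)
    (ht0 : 0 ≤ t) (ht1 : t ≤ 1) (hmid : β2 = (1 - t) * β1 + t * β3) :
    (1 - t) * Fval P1 P2 ζ β1 + t * Fval P1 P2 ζ β3 ≤ Fval P1 P2 ζ β2 := by
  have hA := minF hP1pos hP2pos hs1 hs2 hζ h1 h2
  have hB := minF hP1pos hP2pos hs1 hs2 hζ h3 h2
  have hF2 : Fval P1 P2 ζ β2
      = (1 - t) * (β1 * KL P1 (Mmix P1 P2 ζ β2) + ζ * KL P2 (Mmix P1 P2 ζ β2))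
      + t * (β3 * KL P1 (Mmix P1 P2 ζ β2) + ζ * KL P2 (Mmix P1 P2 ζ β2)) := by
    rw [Fval, hmid]; ring
  nlinarith [mul_le_mul_of_nonneg_left hA (by linarith : (0:ℝ) ≤ 1 - t),
    mul_le_mul_of_nonneg_left hB ht0]

end aux

/-- `g2(α) = GJS((α·P1 + ζ·P2)/(α+ζ), P1, (α+ζ)/r)` is
monotonically nonincreasing on `[θ, 1−θ−ζ]`. -/
theorem g2_antitoneOn [Nonempty X]
    (P1 P2 : X → ℝ) (hP1 : IsProbDist P1) (hP2 : IsProbDist P2)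
    (hP1pos : ∀ x, 0 < P1 x) (hP2pos : ∀ x, 0 < P2 x) (hne : P1 ≠ P2)
    {r θ ζ : ℝ} (hr : 0 < r) (hθ : θ ∈ Set.Ioo (0 : ℝ) (1 / 2))
    (hζ : ζ ∈ Set.Ioo (0 : ℝ) (1 - 2 * θ)) :
    AntitoneOn
      (fun α : ℝ =>
        GJS (fun x => (α * P1 x + ζ * P2 x) / (α + ζ)) P1 ((α + ζ) / r))
      (Set.Icc θ (1 - θ - ζ)) := by
  obtain ⟨hθ0, hθh⟩ := hθ
  obtain ⟨hζ0, hζu⟩ := hζ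
  have hs1 := hP1.2
  have hs2 := hP2.2
  intro α1 hα1 α2 hα2 h12
  have hα1pos : 0 < α1 := lt_of_lt_of_le hθ0 hα1.1
  have hα2pos : 0 < α2 := lt_of_lt_of_le hθ0 hα2.1
  show GJS (Mmix P1 P2 ζ α2) P1 ((α2 + ζ) / r) ≤ GJS (Mmix P1 P2 ζ α1) P1 ((α1 + ζ) / r)
  have hid1 := g2_identity hP1pos hP2pos hζ0 hα1pos hr (P2 := P2)
  have hid2 := g2_identity hP1pos hP2pos hζ0 hα2pos hr (P2 := P2)
  rcases eq_or_lt_of_le h12 with heq | hlt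
  · subst heq; exact le_refl _
  -- concavity step
  have hs : 0 < α2 + r - α1 := by linarith
  have hsne : α2 + r - α1 ≠ 0 := ne_of_gt hs
  set t : ℝ := r / (α2 + r - α1) with ht
  have ht0 : 0 ≤ t := le_of_lt (div_pos hr hs)
  have ht1 : t ≤ 1 := by
    rw [ht, div_le_one hs]; linarith
  have hmid1 : α1 + r = (1 - t) * α1 + t * (α2 + r) := by
    rw [ht]; field_simp; ring
  have hmid2 : α2 = t * α1 + (1 - t) * (α2 + r) := by
    rw [ht]; field_simp; ring
  have hc1 := F_concave_step hP1pos hP2pos hs1 hs2 hζ0 hα1pos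
    (by linarith : (0:ℝ) < α1 + r) (by linarith : (0:ℝ) < α2 + r) ht0 ht1 hmid1
  have hc2 := F_concave_step hP1pos hP2pos hs1 hs2 hζ0 hα1pos
    (by linarith : (0:ℝ) < α2) (by linarith : (0:ℝ) < α2 + r)
    (by linarith : (0:ℝ) ≤ 1 - t) (by linarith : 1 - t ≤ 1)
    (by rw [sub_sub_cancel]; exact hmid2)
  -- conclude
  have hkey : Fval P1 P2 ζ (α2 + r) - Fval P1 P2 ζ α2
      ≤ Fval P1 P2 ζ (α1 + r) - Fval P1 P2 ζ α1 := by linarith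
  have hm : r * GJS (Mmix P1 P2 ζ α2) P1 ((α2 + ζ) / r)
      ≤ r * GJS (Mmix P1 P2 ζ α1) P1 ((α1 + ζ) / r) := by
    rw [hid1, hid2]; exact hkey
  exact (mul_le_mul_iff_right₀ hr).mp hm

end StmtNS
end

section
/- Let 𝒳 be a nonempty finite set, let P1 ≠ P2 be full-support probability distributions on 𝒳 and let β > 0. Then the function φ(t) = GJS(t·P1 + (1−t)·P2, P2, β) is strictly increasing on the interval [0,1). -/
namespace Stmt5

variable {X : Type*} [Fintype X]

/-- `P` is a probability distribution on the finite set `X`. -/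
def IsProbDist (P : X → ℝ) : Prop := (∀ x, 0 ≤ P x) ∧ (∑ x, P x) = 1

/-- Kullback–Leibler divergence `D(P‖Q) = ∑_{x : P(x) > 0} P(x) log (P(x)/Q(x))`. -/
noncomputable def KL (P Q : X → ℝ) : ℝ :=
  ∑ x, if 0 < P x then P x * Real.log (P x / Q x) else 0

/-- Generalized Jensen–Shannon divergence. -/
noncomputable def GJS (Q Qt : X → ℝ) (a : ℝ) : ℝ :=
  a * KL Q (fun x => (a * Q x + Qt x) / (a + 1)) +
    KL Qt (fun x => (a * Q x + Qt x) / (a + 1))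

private lemma aux_deriv (a b β t : ℝ) (hQ : 0 < t * a + (1 - t) * b) (hβ : 0 < β)
    (hb : 0 < b) :
    HasDerivAt (fun s : ℝ =>
      β * ((s * a + (1 - s) * b) *
        (Real.log (s * a + (1 - s) * b) -
          Real.log ((β * (s * a + (1 - s) * b) + b) / (β + 1)))) +
      b * (Real.log b - Real.log ((β * (s * a + (1 - s) * b) + b) / (β + 1))))
      (β * (a - b) *
        (Real.log (t * a + (1 - t) * b) -
          Real.log ((β * (t * a + (1 - t) * b) + b) / (β + 1)))) t := by
  have hβ1 : (0:ℝ) < β + 1 := by linarith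
  have hM : 0 < (β * (t * a + (1 - t) * b) + b) / (β + 1) := by
    apply div_pos _ hβ1
    nlinarith
  have hQ' : HasDerivAt (fun s : ℝ => s * a + (1 - s) * b) (a - b) t := by
    have : (fun s : ℝ => s * a + (1 - s) * b) = fun s => s * (a - b) + b := by
      funext s; ring
    rw [this]
    simpa using ((hasDerivAt_id t).mul_const (a - b)).add_const b
  have hM' : HasDerivAt (fun s : ℝ => (β * (s * a + (1 - s) * b) + b) / (β + 1))
      ((β * (a - b)) / (β + 1)) t := ((hQ'.const_mul β).add_const b).div_const _
  have hlogQ : HasDerivAt (fun s : ℝ => Real.log (s * a + (1 - s) * b))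
      ((a - b) / (t * a + (1 - t) * b)) t := hQ'.log hQ.ne'
  have hlogM : HasDerivAt (fun s : ℝ =>
      Real.log ((β * (s * a + (1 - s) * b) + b) / (β + 1)))
      ((β * (a - b) / (β + 1)) / ((β * (t * a + (1 - t) * b) + b) / (β + 1))) t :=
    hM'.log hM.ne'
  have h1 := ((hQ'.mul (hlogQ.sub hlogM)).const_mul β).add
    (((hasDerivAt_const t (Real.log b)).sub hlogM).const_mul b)
  refine h1.congr_deriv ?_
  have hQne := hQ.ne'
  have hβ1ne := hβ1.ne'
  have hMne : β * (t * a + (1 - t) * b) + b ≠ 0 := by nlinarith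
  simp only [Pi.sub_apply]
  rw [div_div_div_cancel_right₀ hβ1ne]
  generalize t * a + (1 - t) * b = Q at *
  field_simp
  ring

private lemma aux_nonneg (a b β t : ℝ) (ha : 0 < a) (hb : 0 < b) (hβ : 0 < β)
    (ht0 : 0 < t) (ht1 : t < 1) :
    0 ≤ β * (a - b) *
      (Real.log (t * a + (1 - t) * b) -
        Real.log ((β * (t * a + (1 - t) * b) + b) / (β + 1))) := by
  have hβ1 : (0:ℝ) < β + 1 := by linarith
  have hQ : 0 < t * a + (1 - t) * b := by nlinarith
  have hM : 0 < (β * (t * a + (1 - t) * b) + b) / (β + 1) := by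
    apply div_pos _ hβ1; nlinarith
  rcases lt_trichotomy a b with h | h | h
  · have hlt : t * a + (1 - t) * b < (β * (t * a + (1 - t) * b) + b) / (β + 1) := by
      rw [lt_div_iff₀ hβ1]; nlinarith
    have h1 : β * (a - b) < 0 := mul_neg_of_pos_of_neg hβ (by linarith)
    exact (mul_pos_of_neg_of_neg h1 (by linarith [Real.log_lt_log hQ hlt])).le
  · simp [h]
  · have hlt : (β * (t * a + (1 - t) * b) + b) / (β + 1) < t * a + (1 - t) * b := by
      rw [div_lt_iff₀ hβ1]; nlinarith
    exact (mul_pos (mul_pos hβ (by linarith))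
      (by linarith [Real.log_lt_log hM hlt])).le

private lemma aux_pos (a b β t : ℝ) (ha : 0 < a) (hb : 0 < b) (hβ : 0 < β)
    (ht0 : 0 < t) (ht1 : t < 1) (hab : a ≠ b) :
    0 < β * (a - b) *
      (Real.log (t * a + (1 - t) * b) -
        Real.log ((β * (t * a + (1 - t) * b) + b) / (β + 1))) := by
  have hβ1 : (0:ℝ) < β + 1 := by linarith
  have hQ : 0 < t * a + (1 - t) * b := by nlinarith
  have hM : 0 < (β * (t * a + (1 - t) * b) + b) / (β + 1) := by
    apply div_pos _ hβ1; nlinarith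
  rcases lt_trichotomy a b with h | h | h
  · have hlt : t * a + (1 - t) * b < (β * (t * a + (1 - t) * b) + b) / (β + 1) := by
      rw [lt_div_iff₀ hβ1]; nlinarith
    have h1 : β * (a - b) < 0 := mul_neg_of_pos_of_neg hβ (by linarith)
    exact mul_pos_of_neg_of_neg h1 (by linarith [Real.log_lt_log hQ hlt])
  · exact absurd h hab
  · have hlt : (β * (t * a + (1 - t) * b) + b) / (β + 1) < t * a + (1 - t) * b := by
      rw [div_lt_iff₀ hβ1]; nlinarith
    exact mul_pos (mul_pos hβ (by linarith))
      (by linarith [Real.log_lt_log hM hlt])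

/-- `t ↦ GJS(t·P1 + (1−t)·P2, P2, β)` is strictly increasing on `[0,1)`. -/
theorem gjs_mix_strictMonoOn [Nonempty X]
    (P1 P2 : X → ℝ) (hP1 : IsProbDist P1) (hP2 : IsProbDist P2)
    (hP1pos : ∀ x, 0 < P1 x) (hP2pos : ∀ x, 0 < P2 x) (hne : P1 ≠ P2)
    {β : ℝ} (hβ : 0 < β) :
    StrictMonoOn (fun t : ℝ => GJS (fun x => t * P1 x + (1 - t) * P2 x) P2 β)
      (Set.Ico (0 : ℝ) 1) := by
  obtain ⟨x0, hx0⟩ : ∃ x, P1 x ≠ P2 x := by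
    by_contra h; push_neg at h; exact hne (funext h)
  set g : ℝ → ℝ := fun t => ∑ x, (β * ((t * P1 x + (1 - t) * P2 x) *
      (Real.log (t * P1 x + (1 - t) * P2 x) -
        Real.log ((β * (t * P1 x + (1 - t) * P2 x) + P2 x) / (β + 1)))) +
      P2 x * (Real.log (P2 x) -
        Real.log ((β * (t * P1 x + (1 - t) * P2 x) + P2 x) / (β + 1)))) with hgdef
  have hQpos : ∀ t ∈ Set.Ico (0:ℝ) 1, ∀ x, 0 < t * P1 x + (1 - t) * P2 x := by
    intro t ht x
    have h1 := hP1pos x; have h2 := hP2pos x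
    nlinarith [ht.1, ht.2]
  have hMpos : ∀ t ∈ Set.Ico (0:ℝ) 1, ∀ x,
      0 < (β * (t * P1 x + (1 - t) * P2 x) + P2 x) / (β + 1) := by
    intro t ht x
    apply div_pos _ (by linarith)
    nlinarith [hQpos t ht x, hP2pos x]
  have heq : ∀ t ∈ Set.Ico (0:ℝ) 1,
      GJS (fun x => t * P1 x + (1 - t) * P2 x) P2 β = g t := by
    intro t ht
    rw [hgdef]
    simp only [GJS, KL]
    rw [Finset.mul_sum, ← Finset.sum_add_distrib]
    apply Finset.sum_congr rfl
    intro x _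
    rw [if_pos (hQpos t ht x), if_pos (hP2pos x),
      Real.log_div (hQpos t ht x).ne' (hMpos t ht x).ne',
      Real.log_div (hP2pos x).ne' (hMpos t ht x).ne']
  have hderiv : ∀ t ∈ Set.Ico (0:ℝ) 1, HasDerivAt g
      (∑ x, β * (P1 x - P2 x) *
        (Real.log (t * P1 x + (1 - t) * P2 x) -
          Real.log ((β * (t * P1 x + (1 - t) * P2 x) + P2 x) / (β + 1)))) t := by
    intro t ht
    exact HasDerivAt.fun_sum fun x _ =>
      aux_deriv (P1 x) (P2 x) β t (hQpos t ht x) hβ (hP2pos x)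
  apply strictMonoOn_of_deriv_pos (convex_Ico 0 1)
  · apply ContinuousOn.congr (f := g)
    · exact fun t ht => ((hderiv t ht).continuousAt).continuousWithinAt
    · exact fun t ht => heq t ht
  · intro t ht
    rw [interior_Ico] at ht
    have hEq : (fun t : ℝ => GJS (fun x => t * P1 x + (1 - t) * P2 x) P2 β) =ᶠ[nhds t] g :=
      Filter.eventuallyEq_of_mem (Ioo_mem_nhds ht.1 ht.2)
        (fun s hs => heq s (Set.Ioo_subset_Ico_self hs))
    rw [hEq.deriv_eq, (hderiv t (Set.Ioo_subset_Ico_self ht)).deriv]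
    apply Finset.sum_pos'
    · intro x _
      exact aux_nonneg (P1 x) (P2 x) β t (hP1pos x) (hP2pos x) hβ ht.1 ht.2
    · exact ⟨x0, Finset.mem_univ x0,
        aux_pos (P1 x0) (P2 x0) β t (hP1pos x0) (hP2pos x0) hβ ht.1 ht.2 hx0⟩

end Stmt5
end

section
/- Let 𝒳 be a nonempty finite set, let P1, P2 be full-support probability distributions on 𝒳 and let β > 0. Then the function φ(t) = GJS(t·P1 + (1−t)·P2, P2, β) satisfies φ(0) = 0 and has (right) derivative 0 at t = 0, i.e., lim_{t→0⁺} φ(t)/t = 0. -/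
namespace StmtNS

variable {X : Type*} [Fintype X]

lemma deriv_aux {a b β : ℝ} (ha : 0 < a) (hb : 0 < b) (hβ : 0 < β) :
    HasDerivAt (fun t : ℝ =>
      β * ((t * a + (1 - t) * b) *
          Real.log ((t * a + (1 - t) * b) / ((β * (t * a + (1 - t) * b) + b) / (β + 1)))) +
        b * Real.log (b / ((β * (t * a + (1 - t) * b) + b) / (β + 1)))) 0 0 := by
  have hβ1 : β + 1 ≠ 0 := by positivity
  have hb' : b ≠ 0 := hb.ne'
  have hq : HasDerivAt (fun t : ℝ => t * a + (1 - t) * b) (a - b) 0 := by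
    have h := ((hasDerivAt_id (0:ℝ)).mul_const a).add
      (((hasDerivAt_const (0:ℝ) (1:ℝ)).sub (hasDerivAt_id 0)).mul_const b)
    refine h.congr_deriv ?_
    ring
  have hm : HasDerivAt (fun t : ℝ => (β * (t * a + (1 - t) * b) + b) / (β + 1))
      (β * (a - b) / (β + 1)) 0 := ((hq.const_mul β).add_const b).div_const (β + 1)
  have hm0 : (β * ((0:ℝ) * a + (1 - 0) * b) + b) / (β + 1) = b := by
    field_simp; ring
  have hm0ne : (β * ((0:ℝ) * a + (1 - 0) * b) + b) / (β + 1) ≠ 0 := by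
    rw [hm0]; exact hb'
  have hr := hq.div hm hm0ne
  have hrne : ((0:ℝ) * a + (1 - 0) * b) / ((β * ((0:ℝ) * a + (1 - 0) * b) + b) / (β + 1)) ≠ 0 := by
    rw [hm0]; simp [hb']
  have hlog := hr.log hrne
  have hr2 := (hasDerivAt_const (0:ℝ) b).div hm hm0ne
  have hrne2 : b / ((β * ((0:ℝ) * a + (1 - 0) * b) + b) / (β + 1)) ≠ 0 := by
    rw [hm0]; simp [hb']
  have hlog2 := hr2.log hrne2
  have h := (hq.mul hlog).const_mul β |>.add (hlog2.const_mul b)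
  refine h.congr_deriv ?_
  rw [hm0]
  norm_num [hb']
  field_simp
  simp

/-- `φ(t) = GJS(t·P1 + (1−t)·P2, P2, β)` satisfies `φ(0) = 0` and
`lim_{t→0⁺} φ(t)/t = 0`. -/
theorem gjs_mix_zero_and_right_deriv_zero [Nonempty X]
    (P1 P2 : X → ℝ) (hP1 : IsProbDist P1) (hP2 : IsProbDist P2)
    (hP1pos : ∀ x, 0 < P1 x) (hP2pos : ∀ x, 0 < P2 x)
    {β : ℝ} (hβ : 0 < β) :
    GJS (fun x => (0 : ℝ) * P1 x + (1 - 0) * P2 x) P2 β = 0 ∧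
    Filter.Tendsto
      (fun t : ℝ => GJS (fun x => t * P1 x + (1 - t) * P2 x) P2 β / t)
      (nhdsWithin 0 (Set.Ioi 0)) (nhds 0) := by
  have hβ1 : β + 1 ≠ 0 := by positivity
  -- the smooth version of φ
  set F : ℝ → ℝ := fun t => ∑ x,
    (β * ((t * P1 x + (1 - t) * P2 x) *
        Real.log ((t * P1 x + (1 - t) * P2 x) /
          ((β * (t * P1 x + (1 - t) * P2 x) + P2 x) / (β + 1)))) +
      P2 x * Real.log (P2 x /
          ((β * (t * P1 x + (1 - t) * P2 x) + P2 x) / (β + 1)))) with hFdef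
  have hF0 : F 0 = 0 := by
    rw [hFdef]
    apply Finset.sum_eq_zero
    intro x _
    have h1 : (0:ℝ) * P1 x + (1 - 0) * P2 x = P2 x := by ring
    have h2 : (β * P2 x + P2 x) / (β + 1) = P2 x := by
      field_simp
    rw [h1, h2, div_self (hP2pos x).ne', Real.log_one]
    ring
  have hFderiv : HasDerivAt F 0 0 := by
    rw [hFdef]
    have := HasDerivAt.fun_sum (u := Finset.univ)
      (A' := fun _ : X => (0:ℝ))
      (fun x _ => deriv_aux (hP1pos x) (hP2pos x) hβ)
    simpa using this
  have key : ∀ t ∈ Set.Ioo (0:ℝ) 1,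
      GJS (fun x => t * P1 x + (1 - t) * P2 x) P2 β = F t := by
    intro t ht
    have hQ : ∀ x, 0 < t * P1 x + (1 - t) * P2 x := by
      intro x
      have h1 : 0 < t * P1 x := mul_pos ht.1 (hP1pos x)
      have h2 : 0 ≤ (1 - t) * P2 x :=
        mul_nonneg (by linarith [ht.2]) (hP2pos x).le
      linarith
    rw [hFdef]
    simp only [GJS, KL]
    rw [Finset.mul_sum, ← Finset.sum_add_distrib]
    apply Finset.sum_congr rfl
    intro x _
    rw [if_pos (hQ x), if_pos (hP2pos x)]
  constructor
  · have h1 : (fun x => (0:ℝ) * P1 x + (1 - 0) * P2 x) = P2 := by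
      funext x; ring
    rw [h1]
    simp only [GJS, KL]
    have hz : ∀ x : X, (if 0 < P2 x then P2 x *
        Real.log (P2 x / ((β * P2 x + P2 x) / (β + 1))) else 0) = 0 := by
      intro x
      rw [if_pos (hP2pos x)]
      have h2 : (β * P2 x + P2 x) / (β + 1) = P2 x := by
        field_simp
      rw [h2, div_self (hP2pos x).ne', Real.log_one, mul_zero]
    rw [Finset.sum_eq_zero (fun x _ => hz x), mul_zero, zero_add]
  · have hslope : Filter.Tendsto (fun t : ℝ => F t / t)
        (nhdsWithin 0 (Set.Ioi 0)) (nhds 0) := by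
      have h := hasDerivAt_iff_tendsto_slope.mp hFderiv
      have h2 : Filter.Tendsto (slope F 0) (nhdsWithin 0 (Set.Ioi 0)) (nhds 0) :=
        h.mono_left (nhdsWithin_mono 0 (fun t ht => ht.ne'))
      refine h2.congr' ?_
      filter_upwards [self_mem_nhdsWithin] with t ht
      simp [slope_def_field, hF0, div_eq_mul_inv, mul_comm]
    refine hslope.congr' ?_
    filter_upwards [Ioo_mem_nhdsGT_of_mem (Set.mem_Ico.mpr ⟨le_refl 0, one_pos⟩)] with t ht
    rw [key t ht]

end StmtNS
end

section
/- Let 𝒳 be a nonempty finite set and let P1 ≠ P2 be full-support probability distributions on 𝒳. Then the function ψ(β) = D(P2 ‖ β·P1 + (1−β)·P2) is strictly increasing on the interval [0,1). -/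
namespace StmtNS

variable {X : Type*} [Fintype X]

/-- `ψ(β) = D(P2 ‖ β·P1 + (1−β)·P2)` is strictly increasing on `[0,1)`. -/
theorem kl_mix_strictMonoOn [Nonempty X]
    (P1 P2 : X → ℝ) (hP1 : IsProbDist P1) (hP2 : IsProbDist P2)
    (hP1pos : ∀ x, 0 < P1 x) (hP2pos : ∀ x, 0 < P2 x) (hne : P1 ≠ P2) :
    StrictMonoOn (fun β : ℝ => KL P2 (fun x => β * P1 x + (1 - β) * P2 x))
      (Set.Ico (0 : ℝ) 1) := by
  obtain ⟨x0, hx0⟩ := Function.ne_iff.mp hne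
  set ψ : ℝ → ℝ :=
    fun β => ∑ x, P2 x * Real.log (P2 x / (β * P1 x + (1 - β) * P2 x)) with hψdef
  have hKL : ∀ β : ℝ, KL P2 (fun x => β * P1 x + (1 - β) * P2 x) = ψ β := by
    intro β
    simp only [KL, hψdef]
    exact Finset.sum_congr rfl fun x _ => if_pos (hP2pos x)
  have hQpos : ∀ β ∈ Set.Ico (0:ℝ) 1, ∀ x, 0 < β * P1 x + (1 - β) * P2 x := by
    intro β hβ x
    have h1 := hP1pos x; have h2 := hP2pos x
    nlinarith [hβ.1, hβ.2]
  have hψ0 : ψ 0 = 0 := by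
    rw [hψdef]
    refine Finset.sum_eq_zero fun x _ => ?_
    rw [show (0:ℝ) * P1 x + (1 - 0) * P2 x = P2 x by ring, div_self (hP2pos x).ne',
      Real.log_one, mul_zero]
  have hgibbs : ∀ β ∈ Set.Ico (0:ℝ) 1, 0 ≤ ψ β := by
    intro β hβ
    have key : ∀ x : X, P2 x - (β * P1 x + (1 - β) * P2 x)
        ≤ P2 x * Real.log (P2 x / (β * P1 x + (1 - β) * P2 x)) := by
      intro x
      have hq := hQpos β hβ x
      have hp := hP2pos x
      have hlog := Real.log_le_sub_one_of_pos (div_pos hq hp)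
      have hflip : Real.log (P2 x / (β * P1 x + (1 - β) * P2 x))
          = - Real.log ((β * P1 x + (1 - β) * P2 x) / P2 x) := by
        rw [← Real.log_inv, inv_div]
      rw [hflip]
      have h2 := mul_le_mul_of_nonneg_left hlog hp.le
      have h3 : P2 x * ((β * P1 x + (1 - β) * P2 x) / P2 x - 1)
          = (β * P1 x + (1 - β) * P2 x) - P2 x := by field_simp
      nlinarith [h2, h3]
    have hsum : ∑ x, (P2 x - (β * P1 x + (1 - β) * P2 x)) = 0 := by
      have e1 : ∑ x, (P2 x - (β * P1 x + (1 - β) * P2 x))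
          = (∑ x, P2 x) - (β * (∑ x, P1 x) + (1 - β) * (∑ x, P2 x)) := by
        rw [Finset.mul_sum, Finset.mul_sum, ← Finset.sum_add_distrib,
          ← Finset.sum_sub_distrib]
      rw [e1, hP1.2, hP2.2]; ring
    calc (0:ℝ) = ∑ x, (P2 x - (β * P1 x + (1 - β) * P2 x)) := hsum.symm
      _ ≤ ψ β := Finset.sum_le_sum fun x _ => key x
  -- strict convexity inequality
  have hconv : ∀ α ∈ Set.Ico (0:ℝ) 1, ∀ β ∈ Set.Ico (0:ℝ) 1, α ≠ β →
      ∀ a b : ℝ, 0 < a → 0 < b → a + b = 1 →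
      ψ (a * α + b * β) < a * ψ α + b * ψ β := by
    intro α hα β hβ hαβ a b ha hb hab
    have hmixmem : a * α + b * β ∈ Set.Ico (0:ℝ) 1 := by
      constructor
      · nlinarith [hα.1, hβ.1]
      · nlinarith [hα.2, hβ.2]
    have hmix : ∀ x, (a * α + b * β) * P1 x + (1 - (a * α + b * β)) * P2 x
        = a * (α * P1 x + (1 - α) * P2 x) + b * (β * P1 x + (1 - β) * P2 x) := by
      intro x
      have hb' : b = 1 - a := by linarith
      rw [hb']; ring
    have hlogcc : ∀ u v : ℝ, 0 < u → 0 < v →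
        a * Real.log u + b * Real.log v ≤ Real.log (a * u + b * v) := by
      intro u v hu hv
      rcases eq_or_ne u v with h | h
      · subst h
        have e1 : a * u + b * u = u := by nlinarith
        have e2 : a * Real.log u + b * Real.log u = Real.log u := by
          linear_combination Real.log u * hab
        rw [e1, e2]
      · have := strictConcaveOn_log_Ioi.2 (Set.mem_Ioi.mpr hu) (Set.mem_Ioi.mpr hv)
          h ha hb hab
        simpa [smul_eq_mul] using this.le
    -- per-term inequality
    have hterm : ∀ x : X,
        P2 x * Real.log (P2 x / ((a * α + b * β) * P1 x + (1 - (a * α + b * β)) * P2 x))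
        ≤ a * (P2 x * Real.log (P2 x / (α * P1 x + (1 - α) * P2 x)))
          + b * (P2 x * Real.log (P2 x / (β * P1 x + (1 - β) * P2 x))) := by
      intro x
      have hp := hP2pos x
      have hqα := hQpos α hα x
      have hqβ := hQpos β hβ x
      rw [hmix x, Real.log_div hp.ne' (by nlinarith : (0:ℝ) < a * (α * P1 x + (1 - α) * P2 x) + b * (β * P1 x + (1 - β) * P2 x)).ne',
        Real.log_div hp.ne' hqα.ne', Real.log_div hp.ne' hqβ.ne']
      have hcc := hlogcc _ _ hqα hqβ
      have h2 := mul_le_mul_of_nonneg_left hcc hp.le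
      have e : a * (P2 x * (Real.log (P2 x) - Real.log (α * P1 x + (1 - α) * P2 x)))
          + b * (P2 x * (Real.log (P2 x) - Real.log (β * P1 x + (1 - β) * P2 x)))
          = P2 x * Real.log (P2 x)
            - P2 x * (a * Real.log (α * P1 x + (1 - α) * P2 x)
              + b * Real.log (β * P1 x + (1 - β) * P2 x)) := by
        linear_combination (P2 x * Real.log (P2 x)) * hab
      nlinarith [h2, e]
    have hterm0 :
        P2 x0 * Real.log (P2 x0 / ((a * α + b * β) * P1 x0 + (1 - (a * α + b * β)) * P2 x0))
        < a * (P2 x0 * Real.log (P2 x0 / (α * P1 x0 + (1 - α) * P2 x0)))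
          + b * (P2 x0 * Real.log (P2 x0 / (β * P1 x0 + (1 - β) * P2 x0))) := by
      have hp := hP2pos x0
      have hqα := hQpos α hα x0
      have hqβ := hQpos β hβ x0
      have hqne : α * P1 x0 + (1 - α) * P2 x0 ≠ β * P1 x0 + (1 - β) * P2 x0 := by
        intro h
        have : (α - β) * (P1 x0 - P2 x0) = 0 := by linarith [h]
        rcases mul_eq_zero.mp this with h1 | h1
        · exact hαβ (by linarith)
        · exact hx0 (by linarith)
      have hcc := strictConcaveOn_log_Ioi.2 (Set.mem_Ioi.mpr hqα) (Set.mem_Ioi.mpr hqβ)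
        hqne ha hb hab
      simp only [smul_eq_mul] at hcc
      rw [hmix x0, Real.log_div hp.ne' (by nlinarith : (0:ℝ) < a * (α * P1 x0 + (1 - α) * P2 x0) + b * (β * P1 x0 + (1 - β) * P2 x0)).ne',
        Real.log_div hp.ne' hqα.ne', Real.log_div hp.ne' hqβ.ne']
      have h2 := mul_lt_mul_of_pos_left hcc hp
      have e : a * (P2 x0 * (Real.log (P2 x0) - Real.log (α * P1 x0 + (1 - α) * P2 x0)))
          + b * (P2 x0 * (Real.log (P2 x0) - Real.log (β * P1 x0 + (1 - β) * P2 x0)))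
          = P2 x0 * Real.log (P2 x0)
            - P2 x0 * (a * Real.log (α * P1 x0 + (1 - α) * P2 x0)
              + b * Real.log (β * P1 x0 + (1 - β) * P2 x0)) := by
        linear_combination (P2 x0 * Real.log (P2 x0)) * hab
      nlinarith [h2, e]
    have e2 : a * ψ α + b * ψ β
        = ∑ x, (a * (P2 x * Real.log (P2 x / (α * P1 x + (1 - α) * P2 x)))
          + b * (P2 x * Real.log (P2 x / (β * P1 x + (1 - β) * P2 x)))) := by
      rw [hψdef]
      rw [Finset.mul_sum, Finset.mul_sum, ← Finset.sum_add_distrib]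
    rw [hψdef, e2]
    exact Finset.sum_lt_sum (fun x _ => hterm x) ⟨x0, Finset.mem_univ x0, hterm0⟩
  -- conclude
  intro p hp q hq hpq
  simp only []
  rw [hKL p, hKL q]
  have h0mem : (0:ℝ) ∈ Set.Ico (0:ℝ) 1 := ⟨le_refl 0, zero_lt_one⟩
  rcases eq_or_lt_of_le hp.1 with h0 | h0
  · -- p = 0
    have hq0 : (0:ℝ) ≠ q := by
      intro h; rw [← h] at hpq; exact absurd hpq (by rw [← h0]; exact lt_irrefl 0)
    have hmid := hconv 0 h0mem q hq hq0 (1/2) (1/2) (by norm_num) (by norm_num)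
      (by norm_num)
    have hmidmem : (1/2 : ℝ) * 0 + (1/2) * q ∈ Set.Ico (0:ℝ) 1 := by
      constructor
      · nlinarith [hq.1]
      · nlinarith [hq.2]
    have hge := hgibbs _ hmidmem
    rw [hψ0] at hmid
    rw [← h0, hψ0]
    linarith
  · -- 0 < p
    have hqpos : 0 < p := h0
    have hq2 : 0 < q := lt_trans h0 hpq
    have hs1 : 0 < p / q := div_pos hqpos hq2
    have hs2 : p / q < 1 := (div_lt_one hq2).mpr hpq
    have hcv := hconv 0 h0mem q hq (ne_of_lt hq2) (1 - p / q) (p / q)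
      (by linarith) hs1 (by ring)
    have hmeq : (1 - p / q) * 0 + (p / q) * q = p := by field_simp; ring
    rw [hmeq, hψ0] at hcv
    have hgq := hgibbs q hq
    nlinarith [hcv, hgq]

end StmtNS
end

section
/- Let 𝒳 be a nonempty finite set, let P1, P2 be full-support probability distributions on 𝒳 and let r' > 0. Then for every t ∈ [0,1], ∑_{x∈𝒳} (t+r')·(t·P1(x) + (1−t)·P2(x))·P2(x) / ( r'·t·P1(x) + (r' − r'·t + t)·P2(x) ) ≤ 1, with equality when t = 0. -/
namespace StmtNS

variable {X : Type*} [Fintype X]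

/-- Weighted harmonic mean ≤ weighted arithmetic mean, in the form we need. -/
lemma hm_le_am {a b t r' : ℝ} (ha : 0 < a) (hb : 0 < b) (ht : 0 ≤ t) (hr' : 0 < r') :
    (t + r') * a * b / (r' * a + t * b) ≤ (t * a + r' * b) / (t + r') := by
  have hd1 : 0 < r' * a + t * b := by positivity
  have hd2 : 0 < t + r' := by linarith
  rw [div_le_div_iff₀ hd1 hd2]
  nlinarith [mul_nonneg (mul_nonneg ht hr'.le) (sq_nonneg (a - b))]

/-- for all `t ∈ [0,1]`,
`∑_x (t+r')·(t·P1(x)+(1−t)·P2(x))·P2(x)/(r'·t·P1(x)+(r'−r'·t+t)·P2(x)) ≤ 1`,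
with equality at `t = 0`. -/
theorem sum_ratio_le_one [Nonempty X]
    (P1 P2 : X → ℝ) (hP1 : IsProbDist P1) (hP2 : IsProbDist P2)
    (hP1pos : ∀ x, 0 < P1 x) (hP2pos : ∀ x, 0 < P2 x)
    {r' : ℝ} (hr' : 0 < r') :
    (∀ t ∈ Set.Icc (0 : ℝ) 1,
      ∑ x, (t + r') * (t * P1 x + (1 - t) * P2 x) * P2 x /
          (r' * t * P1 x + (r' - r' * t + t) * P2 x) ≤ 1) ∧
    ∑ x, ((0 : ℝ) + r') * (0 * P1 x + (1 - 0) * P2 x) * P2 x /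
        (r' * 0 * P1 x + (r' - r' * 0 + 0) * P2 x) = 1 := by
  constructor
  · intro t ht
    obtain ⟨ht0, ht1⟩ := ht
    have hQpos : ∀ x, 0 < t * P1 x + (1 - t) * P2 x := by
      intro x
      rcases eq_or_lt_of_le ht0 with h | h
      · simp [← h, hP2pos x]
      · nlinarith [hP1pos x, hP2pos x, mul_nonneg (sub_nonneg.2 ht1) (hP2pos x).le]
    calc ∑ x, (t + r') * (t * P1 x + (1 - t) * P2 x) * P2 x /
          (r' * t * P1 x + (r' - r' * t + t) * P2 x)
        ≤ ∑ x, (t * (t * P1 x + (1 - t) * P2 x) + r' * P2 x) / (t + r') := by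
          apply Finset.sum_le_sum
          intro x _
          have h := hm_le_am (hQpos x) (hP2pos x) ht0 hr'
          have hden : r' * t * P1 x + (r' - r' * t + t) * P2 x
              = r' * (t * P1 x + (1 - t) * P2 x) + t * P2 x := by ring
          rw [hden]
          exact h
      _ = 1 := by
          rw [← Finset.sum_div]
          have : ∑ x, (t * (t * P1 x + (1 - t) * P2 x) + r' * P2 x)
              = (t + r') := by
            simp only [mul_add, ← mul_assoc]
            rw [Finset.sum_add_distrib, Finset.sum_add_distrib,
              ← Finset.mul_sum, ← Finset.mul_sum, ← Finset.mul_sum, hP1.2, hP2.2]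
            ring
          rw [this, div_self (by linarith)]
  · have : ∀ x : X, ((0 : ℝ) + r') * (0 * P1 x + (1 - 0) * P2 x) * P2 x /
        (r' * 0 * P1 x + (r' - r' * 0 + 0) * P2 x) = P2 x := by
      intro x
      have h2 := hP2pos x
      field_simp
      ring
    simp only [this]
    exact hP2.2

end StmtNS
end

section
/- Let 𝒳 be a nonempty finite set, let P1, P2 be full-support probability distributions on 𝒳 and let r' > 0. Then the function t ↦ (r'/t) · D( t·P1 + (1−t)·P2 ‖ ( r'·(t·P1 + (1−t)·P2) + t·P2 ) / (t + r') ) is monotonically nondecreasing on the interval (0,1). -/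
namespace StmtNS

variable {X : Type*} [Fintype X]

lemma mul_log_div_le {p q : ℝ} (hp : 0 < p) (hq : 0 < q) :
    p * Real.log (q / p) ≤ q - p := by
  have h := Real.log_le_sub_one_of_pos (show 0 < q / p by positivity)
  calc p * Real.log (q / p) ≤ p * (q / p - 1) := mul_le_mul_of_nonneg_left h hp.le
    _ = q - p := by field_simp

lemma logsum2 {a b c d : ℝ} (ha : 0 < a) (hb : 0 < b) (hc : 0 < c) (hd : 0 < d) :
    (a + b) * Real.log ((a + b) / (c + d)) ≤ a * Real.log (a / c) + b * Real.log (b / d) := by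
  set za := (a + b) * c / ((c + d) * a) with hza
  set zb := (a + b) * d / ((c + d) * b) with hzb
  have hzapos : 0 < za := by positivity
  have hzbpos : 0 < zb := by positivity
  have e1 : (a + b) / (c + d) = (a / c) * za := by rw [hza]; field_simp
  have e2 : (a + b) / (c + d) = (b / d) * zb := by rw [hzb]; field_simp
  have l1 : Real.log ((a+b)/(c+d)) = Real.log (a/c) + Real.log za := by
    rw [e1, Real.log_mul (by positivity) (ne_of_gt hzapos)]
  have l2 : Real.log ((a+b)/(c+d)) = Real.log (b/d) + Real.log zb := by
    rw [e2, Real.log_mul (by positivity) (ne_of_gt hzbpos)]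
  have b1 : Real.log za ≤ za - 1 := Real.log_le_sub_one_of_pos hzapos
  have b2 : Real.log zb ≤ zb - 1 := Real.log_le_sub_one_of_pos hzbpos
  have hsum : a * za + b * zb = a + b := by rw [hza, hzb]; field_simp
  have key : (a + b) * Real.log ((a+b)/(c+d))
      = a * Real.log (a/c) + b * Real.log (b/d) + (a * Real.log za + b * Real.log zb) := by
    nlinarith [l1, l2]
  nlinarith [mul_le_mul_of_nonneg_left b1 ha.le, mul_le_mul_of_nonneg_left b2 hb.le]

lemma core {X : Type*} [Fintype X] (P2 Δ : X → ℝ)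
    (hsum2 : ∑ x, P2 x = 1) (hΔ : ∑ x, Δ x = 0)
    (hpos : ∀ ν : ℝ, 0 ≤ ν → ν ≤ 1 → ∀ x, 0 < P2 x + ν * Δ x)
    {r' s t : ℝ} (hr' : 0 < r') (hs0 : 0 < s) (hst : s < t) (ht1 : t < 1) :
    r'/s * ∑ x, (P2 x + s*Δ x) * Real.log ((P2 x + s*Δ x)/(P2 x + (r'*s/(s+r'))*Δ x))
      ≤ r'/t * ∑ x, (P2 x + t*Δ x) * Real.log ((P2 x + t*Δ x)/(P2 x + (r'*t/(t+r'))*Δ x)) := by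
  have ht0 : 0 < t := lt_trans hs0 hst
  have hs1 : s < 1 := lt_trans hst ht1
  have hsr : 0 < s + r' := by linarith
  have htr : 0 < t + r' := by linarith
  obtain ⟨lams, hlams⟩ : ∃ a : ℝ, a = r'*s/(s+r') := ⟨_, rfl⟩
  obtain ⟨lamt, hlamt⟩ : ∃ a : ℝ, a = r'*t/(t+r') := ⟨_, rfl⟩
  obtain ⟨μ, hμ⟩ : ∃ a : ℝ, a = r'*s/(t+r') := ⟨_, rfl⟩
  rw [← hlams, ← hlamt]
  have hlams_pos : 0 < lams := by rw [hlams]; positivity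
  have hlamt_pos : 0 < lamt := by rw [hlamt]; positivity
  have hμ_pos : 0 < μ := by rw [hμ]; positivity
  have hlams_lt : lams < s := by rw [hlams, div_lt_iff₀ hsr]; nlinarith
  have hlamt_lt : lamt < t := by rw [hlamt, div_lt_iff₀ htr]; nlinarith
  have hμ_lt : μ < lams := by
    rw [hμ, hlams]
    exact div_lt_div_of_pos_left (by positivity) hsr (by linarith)
  obtain ⟨c, hc⟩ : ∃ a : ℝ, a = (s - lams)/(s - μ) := ⟨_, rfl⟩
  have hsμ : 0 < s - μ := by linarith
  have hc0 : 0 < c := hc ▸ div_pos (by linarith) hsμ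
  have hc1 : c < 1 := by rw [hc, div_lt_one hsμ]; linarith
  have hcmul : c * (s - μ) = s - lams := by rw [hc]; exact div_mul_cancel₀ _ (ne_of_gt hsμ)
  have hcoef : c * μ + (1 - c) * s = lams := by nlinarith [hcmul]
  obtain ⟨θ, hθ⟩ : ∃ a : ℝ, a = s/t := ⟨_, rfl⟩
  have hθ0 : 0 < θ := by rw [hθ]; positivity
  have hθ1 : θ < 1 := by rw [hθ, div_lt_one ht0]; exact hst
  have hθt : θ * t = s := by rw [hθ]; exact div_mul_cancel₀ s (ne_of_gt ht0)
  have hθlam : θ * lamt = μ := by rw [hθ, hlamt, hμ]; field_simp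
  -- sum of each mixture is 1
  have hmsum : ∀ ν : ℝ, ∑ x, (P2 x + ν * Δ x) = 1 := by
    intro ν
    rw [Finset.sum_add_distrib, hsum2, ← Finset.mul_sum, hΔ]
    ring
  -- Gibbs : 0 ≤ K s μ
  have hGibbs : 0 ≤ ∑ x, (P2 x + s*Δ x) * Real.log ((P2 x + s*Δ x)/(P2 x + μ*Δ x)) := by
    have h := Finset.sum_le_sum (s := Finset.univ)
      (f := fun x => (P2 x + s*Δ x) - (P2 x + μ*Δ x))
      (g := fun x => (P2 x + s*Δ x) * Real.log ((P2 x + s*Δ x)/(P2 x + μ*Δ x))) ?_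
    · calc (0:ℝ) = ∑ x, ((P2 x + s*Δ x) - (P2 x + μ*Δ x)) := by
            rw [Finset.sum_sub_distrib, hmsum, hmsum]; ring
        _ ≤ _ := h
    · intro x _
      have hp := hpos s hs0.le hs1.le x
      have hq := hpos μ hμ_pos.le (by linarith) x
      have h1 := mul_log_div_le hp hq
      have h2 : Real.log ((P2 x + μ*Δ x)/(P2 x + s*Δ x))
          = - Real.log ((P2 x + s*Δ x)/(P2 x + μ*Δ x)) := by
        rw [← Real.log_inv]; congr 1; rw [inv_div]
      rw [h2] at h1
      nlinarith [h1]
  -- Step A : K s lams ≤ c * K s μ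
  have stepA : ∑ x, (P2 x + s*Δ x) * Real.log ((P2 x + s*Δ x)/(P2 x + lams*Δ x))
      ≤ c * ∑ x, (P2 x + s*Δ x) * Real.log ((P2 x + s*Δ x)/(P2 x + μ*Δ x)) := by
    rw [Finset.mul_sum]
    apply Finset.sum_le_sum
    intro x _
    have hPs := hpos s hs0.le hs1.le x
    have hPμ := hpos μ hμ_pos.le (by linarith) x
    have h := logsum2 (a := c*(P2 x + s*Δ x)) (b := (1-c)*(P2 x + s*Δ x))
      (c := c*(P2 x + μ*Δ x)) (d := (1-c)*(P2 x + s*Δ x))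
      (mul_pos hc0 hPs) (mul_pos (by linarith : (0:ℝ) < 1 - c) hPs)
      (mul_pos hc0 hPμ) (mul_pos (by linarith : (0:ℝ) < 1 - c) hPs)
    have e1 : c*(P2 x + s*Δ x) + (1-c)*(P2 x + s*Δ x) = P2 x + s*Δ x := by ring
    have e2 : c*(P2 x + μ*Δ x) + (1-c)*(P2 x + s*Δ x)
        = P2 x + (c * μ + (1 - c) * s) * Δ x := by ring
    rw [hcoef] at e2
    have e3 : c*(P2 x + s*Δ x) / (c*(P2 x + μ*Δ x)) = (P2 x + s*Δ x)/(P2 x + μ*Δ x) :=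
      mul_div_mul_left _ _ (ne_of_gt hc0)
    have e4 : (1-c)*(P2 x + s*Δ x) / ((1-c)*(P2 x + s*Δ x)) = 1 :=
      div_self (ne_of_gt (mul_pos (by linarith : (0:ℝ) < 1 - c) hPs))
    rw [e1, e2, e3, e4, Real.log_one] at h
    simp only [mul_zero, add_zero, mul_assoc] at h
    exact h
  -- Step B : K s μ ≤ θ * K t lamt
  have stepB : ∑ x, (P2 x + s*Δ x) * Real.log ((P2 x + s*Δ x)/(P2 x + μ*Δ x))
      ≤ θ * ∑ x, (P2 x + t*Δ x) * Real.log ((P2 x + t*Δ x)/(P2 x + lamt*Δ x)) := by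
    rw [Finset.mul_sum]
    apply Finset.sum_le_sum
    intro x _
    have hPt := hpos t ht0.le ht1.le x
    have hP2x := hpos 0 le_rfl zero_le_one x
    simp only [zero_mul, add_zero] at hP2x
    have hPlamt := hpos lamt hlamt_pos.le (by linarith) x
    have h := logsum2 (a := θ*(P2 x + t*Δ x)) (b := (1-θ)*(P2 x))
      (c := θ*(P2 x + lamt*Δ x)) (d := (1-θ)*(P2 x))
      (mul_pos hθ0 hPt) (mul_pos (by linarith : (0:ℝ) < 1 - θ) hP2x)
      (mul_pos hθ0 hPlamt) (mul_pos (by linarith : (0:ℝ) < 1 - θ) hP2x)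
    have e1 : θ*(P2 x + t*Δ x) + (1-θ)*(P2 x) = P2 x + (θ*t)*Δ x := by ring
    rw [hθt] at e1
    have e2 : θ*(P2 x + lamt*Δ x) + (1-θ)*(P2 x) = P2 x + (θ*lamt)*Δ x := by ring
    rw [hθlam] at e2
    have e3 : θ*(P2 x + t*Δ x) / (θ*(P2 x + lamt*Δ x)) = (P2 x + t*Δ x)/(P2 x + lamt*Δ x) :=
      mul_div_mul_left _ _ (ne_of_gt hθ0)
    have e4 : (1-θ)*(P2 x) / ((1-θ)*(P2 x)) = 1 :=
      div_self (ne_of_gt (mul_pos (by linarith : (0:ℝ) < 1 - θ) hP2x))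
    rw [e1, e2, e3, e4, Real.log_one] at h
    simp only [mul_zero, add_zero, mul_assoc] at h
    exact h
  -- combine
  have hfrac : 0 ≤ r'/s := by positivity
  calc r'/s * ∑ x, (P2 x + s*Δ x) * Real.log ((P2 x + s*Δ x)/(P2 x + lams*Δ x))
      ≤ r'/s * (c * ∑ x, (P2 x + s*Δ x) * Real.log ((P2 x + s*Δ x)/(P2 x + μ*Δ x))) :=
        mul_le_mul_of_nonneg_left stepA hfrac
    _ ≤ r'/s * ∑ x, (P2 x + s*Δ x) * Real.log ((P2 x + s*Δ x)/(P2 x + μ*Δ x)) := by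
        apply mul_le_mul_of_nonneg_left _ hfrac
        nlinarith [hGibbs]
    _ ≤ r'/s * (θ * ∑ x, (P2 x + t*Δ x) * Real.log ((P2 x + t*Δ x)/(P2 x + lamt*Δ x))) :=
        mul_le_mul_of_nonneg_left stepB hfrac
    _ = r'/t * ∑ x, (P2 x + t*Δ x) * Real.log ((P2 x + t*Δ x)/(P2 x + lamt*Δ x)) := by
        rw [hθ, ← mul_assoc]; congr 1; field_simp

/-- `t ↦ (r'/t)·D(t·P1+(1−t)·P2 ‖ (r'·(t·P1+(1−t)·P2)+t·P2)/(t+r'))` is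
monotonically nondecreasing on `(0,1)`. -/
theorem scaled_kl_monotoneOn [Nonempty X]
    (P1 P2 : X → ℝ) (hP1 : IsProbDist P1) (hP2 : IsProbDist P2)
    (hP1pos : ∀ x, 0 < P1 x) (hP2pos : ∀ x, 0 < P2 x)
    {r' : ℝ} (hr' : 0 < r') :
    MonotoneOn
      (fun t : ℝ => (r' / t) *
        KL (fun x => t * P1 x + (1 - t) * P2 x)
          (fun x => (r' * (t * P1 x + (1 - t) * P2 x) + t * P2 x) / (t + r')))
      (Set.Ioo (0 : ℝ) 1) := by
  intro s hs t ht hst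
  obtain ⟨hs0, hs1⟩ := hs
  obtain ⟨ht0, ht1⟩ := ht
  rcases eq_or_lt_of_le hst with rfl | hlt
  · exact le_rfl
  have hΔ : ∑ x, (P1 x - P2 x) = 0 := by
    rw [Finset.sum_sub_distrib, hP1.2, hP2.2]; ring
  have hpos : ∀ ν : ℝ, 0 ≤ ν → ν ≤ 1 → ∀ x, 0 < P2 x + ν * (P1 x - P2 x) := by
    intro ν h0 h1 x
    have hm : 0 < min (P1 x) (P2 x) := lt_min (hP1pos x) (hP2pos x)
    nlinarith [mul_le_mul_of_nonneg_left (min_le_left (P1 x) (P2 x)) h0,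
      mul_le_mul_of_nonneg_left (min_le_right (P1 x) (P2 x)) (by linarith : (0:ℝ) ≤ 1 - ν)]
  have hKLeq : ∀ u : ℝ, 0 < u → u < 1 →
      KL (fun x => u * P1 x + (1 - u) * P2 x)
        (fun x => (r' * (u * P1 x + (1 - u) * P2 x) + u * P2 x) / (u + r'))
      = ∑ x, (P2 x + u*(P1 x - P2 x)) *
          Real.log ((P2 x + u*(P1 x - P2 x))/(P2 x + (r'*u/(u+r'))*(P1 x - P2 x))) := by
    intro u hu0 hu1
    unfold KL
    apply Finset.sum_congr rfl
    intro x _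
    have hur : (0:ℝ) < u + r' := by linarith
    have hp : 0 < u * P1 x + (1 - u) * P2 x := by
      nlinarith [hP1pos x, hP2pos x, mul_pos hu0 (hP1pos x),
        mul_pos (by linarith : (0:ℝ) < 1 - u) (hP2pos x)]
    dsimp only
    rw [if_pos hp]
    have h1 : u * P1 x + (1 - u) * P2 x = P2 x + u * (P1 x - P2 x) := by ring
    have h2 : (r' * (u * P1 x + (1 - u) * P2 x) + u * P2 x) / (u + r')
        = P2 x + (r'*u/(u+r')) * (P1 x - P2 x) := by
      field_simp; ring
    rw [h2, h1]
  simp only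
  rw [hKLeq s hs0 hs1, hKLeq t ht0 ht1]
  exact core P2 (fun x => P1 x - P2 x) hP2.2 hΔ hpos hr' hs0 hlt ht1

end StmtNS
end

section
/- Let 𝒳 be a nonempty finite set, let P1 ≠ P2 be full-support probability distributions on 𝒳 and let r' > 0. Then the function t ↦ GJS( t·P1 + (1−t)·P2, P2, r'/t ) is strictly increasing on the interval (0,1). -/
namespace StmtNS

variable {X : Type*} [Fintype X]

section Aux

variable (P1 P2 : X → ℝ)

/-- the mixture `u·P1 + (1-u)·P2` at point `x` -/
noncomputable def mixf (u : ℝ) (x : X) : ℝ := u * P1 x + (1 - u) * P2 x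

/-- `H(u) = ∑ mix(u) log mix(u)` -/
noncomputable def Hfun (u : ℝ) : ℝ := ∑ x, mixf P1 P2 u x * Real.log (mixf P1 P2 u x)

/-- derivative of `Hfun` -/
noncomputable def Dfun (u : ℝ) : ℝ :=
  ∑ x, (Real.log (mixf P1 P2 u x) + 1) * (P1 x - P2 x)

variable {P1 P2}

lemma mixf_pos (h1 : ∀ x, 0 < P1 x) (h2 : ∀ x, 0 < P2 x) {u : ℝ}
    (hu0 : 0 ≤ u) (hu1 : u ≤ 1) (x : X) : 0 < mixf P1 P2 u x := by
  rcases eq_or_lt_of_le hu0 with h | h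
  · simp [mixf, ← h]; nlinarith [h2 x]
  · have : 0 ≤ (1 - u) * P2 x := mul_nonneg (by linarith) (h2 x).le
    have : 0 < u * P1 x := mul_pos h (h1 x)
    unfold mixf; linarith

lemma hasDerivAt_mixf (u : ℝ) (x : X) :
    HasDerivAt (fun u => mixf P1 P2 u x) (P1 x - P2 x) u := by
  have h := ((hasDerivAt_id u).mul_const (P1 x)).add
    (((hasDerivAt_const u (1:ℝ)).sub (hasDerivAt_id u)).mul_const (P2 x))
  refine h.congr_deriv ?_
  ring

lemma hasDerivAt_Hfun (h1 : ∀ x, 0 < P1 x) (h2 : ∀ x, 0 < P2 x) {u : ℝ}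
    (hu0 : 0 ≤ u) (hu1 : u ≤ 1) :
    HasDerivAt (Hfun P1 P2) (Dfun P1 P2 u) u := by
  apply HasDerivAt.fun_sum
  intro x _
  exact (Real.hasDerivAt_mul_log (mixf_pos h1 h2 hu0 hu1 x).ne').comp u (hasDerivAt_mixf u x)

lemma hasDerivAt_Dfun (h1 : ∀ x, 0 < P1 x) (h2 : ∀ x, 0 < P2 x) {u : ℝ}
    (hu0 : 0 ≤ u) (hu1 : u ≤ 1) :
    HasDerivAt (Dfun P1 P2)
      (∑ x, (mixf P1 P2 u x)⁻¹ * (P1 x - P2 x) * (P1 x - P2 x)) u := by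
  apply HasDerivAt.fun_sum
  intro x _
  exact (((Real.hasDerivAt_log (mixf_pos h1 h2 hu0 hu1 x).ne').comp u
    (hasDerivAt_mixf u x)).add_const 1).mul_const (P1 x - P2 x)

lemma Dfun_strictMonoOn (h1 : ∀ x, 0 < P1 x) (h2 : ∀ x, 0 < P2 x) (hne : P1 ≠ P2) :
    StrictMonoOn (Dfun P1 P2) (Set.Icc (0:ℝ) 1) := by
  obtain ⟨x₀, hx₀⟩ := Function.ne_iff.mp hne
  apply strictMonoOn_of_deriv_pos (convex_Icc 0 1)
  · intro u hu
    exact (hasDerivAt_Dfun h1 h2 hu.1 hu.2).continuousAt.continuousWithinAt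
  · intro u hu
    rw [interior_Icc] at hu
    rw [(hasDerivAt_Dfun h1 h2 hu.1.le hu.2.le).deriv]
    apply Finset.sum_pos'
    · intro x _
      have hq := mixf_pos h1 h2 hu.1.le hu.2.le x
      rw [mul_assoc]
      exact mul_nonneg (inv_pos.mpr hq).le (mul_self_nonneg _)
    · refine ⟨x₀, Finset.mem_univ _, ?_⟩
      have hq := mixf_pos h1 h2 hu.1.le hu.2.le x₀
      have hd : P1 x₀ - P2 x₀ ≠ 0 := sub_ne_zero.mpr hx₀
      rw [mul_assoc]
      exact mul_pos (inv_pos.mpr hq) (mul_self_pos.mpr hd)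

lemma key_ineq (h1 : ∀ x, 0 < P1 x) (h2 : ∀ x, 0 < P2 x) (hne : P1 ≠ P2)
    {l t : ℝ} (hl0 : 0 < l) (hlt : l < t) (ht1 : t ≤ 1) :
    Hfun P1 P2 t - Hfun P1 P2 l < t * Dfun P1 P2 t - l * Dfun P1 P2 l := by
  have hsub : Set.Icc l t ⊆ Set.Icc (0:ℝ) 1 :=
    Set.Icc_subset_Icc hl0.le ht1
  obtain ⟨c, hc, hceq⟩ := exists_hasDerivAt_eq_slope (Hfun P1 P2) (Dfun P1 P2) hlt
    (fun u hu => (hasDerivAt_Hfun h1 h2 (hl0.le.trans hu.1)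
      (hu.2.trans ht1)).continuousAt.continuousWithinAt)
    (fun u hu => hasDerivAt_Hfun h1 h2 (hl0.le.trans hu.1.le) (hu.2.le.trans ht1))
  have hceq' : Hfun P1 P2 t - Hfun P1 P2 l = Dfun P1 P2 c * (t - l) := by
    rw [hceq, div_mul_eq_mul_div, mul_div_assoc,
      div_self (sub_ne_zero.mpr hlt.ne'), mul_one]
  have hmem : ∀ u, l ≤ u → u ≤ t → u ∈ Set.Icc (0:ℝ) 1 :=
    fun u hu1 hu2 => ⟨hl0.le.trans hu1, hu2.trans ht1⟩
  have hDm := Dfun_strictMonoOn h1 h2 hne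
  have hct : Dfun P1 P2 c < Dfun P1 P2 t :=
    hDm (hmem c hc.1.le hc.2.le) (hmem t hlt.le le_rfl) hc.2
  have hlc : Dfun P1 P2 l < Dfun P1 P2 c :=
    hDm (hmem l le_rfl hlt.le) (hmem c hc.1.le hc.2.le) hc.1
  nlinarith [mul_pos (hl0.trans hc.1) (sub_pos.mpr hct),
    mul_pos hl0 (sub_pos.mpr hlc), hceq']

end Aux

theorem gjs_identity {P1 P2 : X → ℝ} (h1 : ∀ x, 0 < P1 x) (h2 : ∀ x, 0 < P2 x)
    {r' t : ℝ} (hr' : 0 < r') (ht0 : 0 < t) (ht1 : t < 1) :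
    GJS (mixf P1 P2 t) P2 (r' / t) =
      r' / t * (Hfun P1 P2 t - Hfun P1 P2 (r' * t / (r' + t)))
        - (Hfun P1 P2 (r' * t / (r' + t)) - Hfun P1 P2 0) := by
  set l : ℝ := r' * t / (r' + t) with hldef
  have hrt : (0:ℝ) < r' + t := by linarith
  have hl0 : 0 < l := div_pos (mul_pos hr' ht0) hrt
  have hlt : l < t := by
    rw [hldef, div_lt_iff₀ hrt]; nlinarith
  have hQ : ∀ x, 0 < mixf P1 P2 t x := mixf_pos h1 h2 ht0.le ht1.le
  have hL : ∀ x, 0 < mixf P1 P2 l x := mixf_pos h1 h2 hl0.le (hlt.trans ht1).le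
  have ha1 : (0:ℝ) < r' / t + 1 := by positivity
  have hM : ∀ x, (r' / t * mixf P1 P2 t x + P2 x) / (r' / t + 1) = mixf P1 P2 l x := by
    intro x
    rw [hldef]
    unfold mixf
    field_simp
    ring
  have hM' : ∀ x, r' / t * mixf P1 P2 t x + P2 x = (r' / t + 1) * mixf P1 P2 l x := by
    intro x
    rw [← hM x, mul_div_cancel₀ _ ha1.ne']
  have e1 : KL (mixf P1 P2 t) (fun x => (r' / t * mixf P1 P2 t x + P2 x) / (r' / t + 1)) =
      Hfun P1 P2 t - ∑ x, mixf P1 P2 t x * Real.log (mixf P1 P2 l x) := by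
    unfold KL Hfun
    rw [← Finset.sum_sub_distrib]
    refine Finset.sum_congr rfl fun x _ => ?_
    rw [if_pos (hQ x)]
    simp only [hM x]
    rw [Real.log_div (hQ x).ne' (hL x).ne', mul_sub]
  have e2 : KL P2 (fun x => (r' / t * mixf P1 P2 t x + P2 x) / (r' / t + 1)) =
      Hfun P1 P2 0 - ∑ x, P2 x * Real.log (mixf P1 P2 l x) := by
    unfold KL Hfun
    rw [← Finset.sum_sub_distrib]
    refine Finset.sum_congr rfl fun x _ => ?_
    rw [if_pos (h2 x)]
    simp only [hM x]
    rw [Real.log_div (h2 x).ne' (hL x).ne', mul_sub]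
    simp [mixf]
  have e3 : r' / t * (∑ x, mixf P1 P2 t x * Real.log (mixf P1 P2 l x))
      + ∑ x, P2 x * Real.log (mixf P1 P2 l x) = (r' / t + 1) * Hfun P1 P2 l := by
    rw [Finset.mul_sum, ← Finset.sum_add_distrib, Hfun, Finset.mul_sum]
    refine Finset.sum_congr rfl fun x _ => ?_
    linear_combination Real.log (mixf P1 P2 l x) * hM' x
  show GJS (mixf P1 P2 t) P2 (r' / t) = _
  unfold GJS
  rw [e1, e2]
  linear_combination -e3

/-- `t ↦ GJS(t·P1 + (1−t)·P2, P2, r'/t)` is strictly increasing on `(0,1)`. -/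
theorem gjs_mix_ratio_strictMonoOn [Nonempty X]
    (P1 P2 : X → ℝ) (hP1 : IsProbDist P1) (hP2 : IsProbDist P2)
    (hP1pos : ∀ x, 0 < P1 x) (hP2pos : ∀ x, 0 < P2 x) (hne : P1 ≠ P2)
    {r' : ℝ} (hr' : 0 < r') :
    StrictMonoOn (fun t : ℝ => GJS (fun x => t * P1 x + (1 - t) * P2 x) P2 (r' / t))
      (Set.Ioo (0 : ℝ) 1) := by
  set F : ℝ → ℝ := fun t =>
    r' / t * (Hfun P1 P2 t - Hfun P1 P2 (r' * t / (r' + t)))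
      - (Hfun P1 P2 (r' * t / (r' + t)) - Hfun P1 P2 0) with hFdef
  have hderiv : ∀ t ∈ Set.Ioo (0:ℝ) 1,
      HasDerivAt F (r' / t ^ 2 * (t * Dfun P1 P2 t
        - (r' * t / (r' + t)) * Dfun P1 P2 (r' * t / (r' + t))
        - (Hfun P1 P2 t - Hfun P1 P2 (r' * t / (r' + t))))) t := by
    rintro t ⟨ht0, ht1⟩
    have hrt : (0:ℝ) < r' + t := by linarith
    have hl0 : 0 < r' * t / (r' + t) := div_pos (mul_pos hr' ht0) hrt
    have hlt : r' * t / (r' + t) < t := by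
      rw [div_lt_iff₀ hrt]; nlinarith
    have hlf : HasDerivAt (fun t : ℝ => r' * t / (r' + t)) (r' ^ 2 / (r' + t) ^ 2) t := by
      have h := ((hasDerivAt_id t).const_mul r').div
        ((hasDerivAt_const t r').add (hasDerivAt_id t)) hrt.ne'
      refine h.congr_deriv ?_
      simp only [Pi.add_apply, id]
      field_simp
      ring
    have hH1 : HasDerivAt (Hfun P1 P2) (Dfun P1 P2 t) t :=
      hasDerivAt_Hfun hP1pos hP2pos ht0.le ht1.le
    have hHl : HasDerivAt (fun t : ℝ => Hfun P1 P2 (r' * t / (r' + t)))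
        (Dfun P1 P2 (r' * t / (r' + t)) * (r' ^ 2 / (r' + t) ^ 2)) t :=
      by have := (hasDerivAt_Hfun hP1pos hP2pos hl0.le (hlt.trans ht1).le).comp t hlf; exact this
    have ha : HasDerivAt (fun t : ℝ => r' / t) (-(r' / t ^ 2)) t := by
      have h := (hasDerivAt_const t r').div (hasDerivAt_id t) ht0.ne'
      refine h.congr_deriv ?_
      simp only [id]
      field_simp
      ring
    have h := (ha.mul (hH1.sub hHl)).sub (hHl.sub_const (Hfun P1 P2 0))
    refine h.congr_deriv ?_
    simp only [Pi.sub_apply]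
    field_simp
    ring
  have hF : StrictMonoOn F (Set.Ioo (0:ℝ) 1) := by
    apply strictMonoOn_of_deriv_pos (convex_Ioo 0 1)
    · exact fun t ht => (hderiv t ht).continuousAt.continuousWithinAt
    · intro t ht
      rw [interior_Ioo] at ht
      rw [(hderiv t ht).deriv]
      obtain ⟨ht0, ht1⟩ := ht
      have hrt : (0:ℝ) < r' + t := by linarith
      have hl0 : 0 < r' * t / (r' + t) := div_pos (mul_pos hr' ht0) hrt
      have hlt : r' * t / (r' + t) < t := by
        rw [div_lt_iff₀ hrt]; nlinarith
      have hk := key_ineq hP1pos hP2pos hne hl0 hlt ht1.le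
      have : (0:ℝ) < r' / t ^ 2 := by positivity
      nlinarith
  refine hF.congr fun t ht => ?_
  exact (gjs_identity hP1pos hP2pos hr' ht.1 ht.2).symm

end StmtNS
end

section
/- Let 𝒳 be a nonempty finite set, let P1 ≠ P2 be full-support probability distributions on 𝒳, let θ ∈ (0,1/2) and r > 0. For s ∈ [θ,1−θ], λ ∈ [0,1] and Q_λ = λ·P1 + (1−λ)·P2, define V(s,λ) = s·Var_{X∼Q_λ}[ log( (s+r)·Q_λ(X) / (s·Q_λ(X) + r·P2(X)) ) ] + r·Var_{X∼P2}[ log( (s+r)·P2(X) / (s·Q_λ(X) + r·P2(X)) ) ]. Then V(s,λ) > 0 for every s ∈ [θ,1−θ] and every λ ∈ (0,1]; moreover, for every δ ∈ (0,1] there exists a constant a > 0 (depending only on θ, r, δ, P1, P2) such that V(s,λ) ≥ a for all s ∈ [θ,1−θ] and all λ ∈ [δ,1]. -/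
namespace StmtNS

variable {X : Type*} [Fintype X]

/-- Expectation of `f` under the distribution `Q`. -/
noncomputable def expect (Q f : X → ℝ) : ℝ := ∑ x, Q x * f x

/-- Variance of `f(X)` for `X ∼ Q`. -/
noncomputable def varD (Q f : X → ℝ) : ℝ := expect Q (fun x => f x ^ 2) - (expect Q f) ^ 2

/-- Third absolute central moment of `f(X)` for `X ∼ Q`. -/
noncomputable def absMom3 (Q f : X → ℝ) : ℝ := ∑ x, Q x * |f x - expect Q f| ^ 3

/-- The mixture `Q_λ = λ·P1 + (1−λ)·P2`. -/
noncomputable def mix (P1 P2 : X → ℝ) (lam : ℝ) : X → ℝ :=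
  fun x => lam * P1 x + (1 - lam) * P2 x

/-- The variance-like quantity `V(s,λ)`. -/
noncomputable def Vfun (P1 P2 : X → ℝ) (r s lam : ℝ) : ℝ :=
  s * varD (mix P1 P2 lam)
      (fun x => Real.log ((s + r) * mix P1 P2 lam x / (s * mix P1 P2 lam x + r * P2 x))) +
    r * varD P2
      (fun x => Real.log ((s + r) * P2 x / (s * mix P1 P2 lam x + r * P2 x)))

/-- The third-absolute-moment analogue `T(s,λ)`. -/
noncomputable def Tfun (P1 P2 : X → ℝ) (r s lam : ℝ) : ℝ :=
  s * absMom3 (mix P1 P2 lam)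
      (fun x => Real.log ((s + r) * mix P1 P2 lam x / (s * mix P1 P2 lam x + r * P2 x))) +
    r * absMom3 P2
      (fun x => Real.log ((s + r) * P2 x / (s * mix P1 P2 lam x + r * P2 x)))

lemma varD_eq_sum (Q f : X → ℝ) (hQ : (∑ x, Q x) = 1) :
    varD Q f = ∑ x, Q x * (f x - expect Q f) ^ 2 := by
  have h : ∀ x, Q x * (f x - expect Q f) ^ 2
      = Q x * f x ^ 2 - (2 * expect Q f) * (Q x * f x) + (expect Q f) ^ 2 * Q x :=
    fun x => by ring
  simp_rw [h, Finset.sum_add_distrib, Finset.sum_sub_distrib, ← Finset.mul_sum, hQ]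
  simp only [varD, expect]
  ring

lemma varD_nonneg (Q f : X → ℝ) (hQ : (∑ x, Q x) = 1) (hpos : ∀ x, 0 ≤ Q x) :
    0 ≤ varD Q f := by
  rw [varD_eq_sum Q f hQ]
  exact Finset.sum_nonneg fun x _ => mul_nonneg (hpos x) (sq_nonneg _)

lemma varD_pos_of_ne (Q f : X → ℝ) (hQ : (∑ x, Q x) = 1) (hpos : ∀ x, 0 < Q x)
    (hnc : ¬ ∀ x, f x = expect Q f) : 0 < varD Q f := by
  rw [varD_eq_sum Q f hQ]
  push_neg at hnc
  obtain ⟨x0, hx0⟩ := hnc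
  apply Finset.sum_pos' (fun x _ => mul_nonneg (hpos x).le (sq_nonneg _))
  exact ⟨x0, Finset.mem_univ x0,
    mul_pos (hpos x0) (pow_two_pos_of_ne_zero (sub_ne_zero_of_ne hx0))⟩

lemma Vfun_pos (P1 P2 : X → ℝ) (hP1 : IsProbDist P1) (hP2 : IsProbDist P2)
    (hP1pos : ∀ x, 0 < P1 x) (hP2pos : ∀ x, 0 < P2 x) (hne : P1 ≠ P2)
    {r : ℝ} (hr : 0 < r) {s lam : ℝ} (hs : 0 < s) (hl : 0 < lam) (hl1 : lam ≤ 1) :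
    0 < Vfun P1 P2 r s lam := by
  set Q := mix P1 P2 lam with hQdef
  have hQpos : ∀ x, 0 < Q x := fun x => by
    have h1 := mul_pos hl (hP1pos x)
    have h2 := mul_nonneg (by linarith : (0:ℝ) ≤ 1 - lam) (hP2pos x).le
    simp only [hQdef, mix]; linarith
  have hQ1 : (∑ x, Q x) = 1 := by
    simp only [hQdef, mix]
    rw [Finset.sum_add_distrib, ← Finset.mul_sum, ← Finset.mul_sum, hP1.2, hP2.2]; ring
  set f := fun x => Real.log ((s + r) * Q x / (s * Q x + r * P2 x)) with hf
  have hDpos : ∀ x, 0 < s * Q x + r * P2 x := fun x =>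
    add_pos (mul_pos hs (hQpos x)) (mul_pos hr (hP2pos x))
  have hsr : (0:ℝ) < s + r := by linarith
  have hV1 : 0 < varD Q f := by
    apply varD_pos_of_ne Q f hQ1 hQpos
    intro hc
    have hkey : ∀ x, Real.exp (expect Q f) * (s * Q x + r * P2 x) = (s + r) * Q x := by
      intro x
      have harg : 0 < (s + r) * Q x / (s * Q x + r * P2 x) :=
        div_pos (mul_pos hsr (hQpos x)) (hDpos x)
      have h2 : Real.exp (expect Q f) = (s + r) * Q x / (s * Q x + r * P2 x) := by
        rw [← hc x]; simp only [hf]; exact Real.exp_log harg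
      rw [eq_div_iff (hDpos x).ne'] at h2
      exact h2
    have hsum : Real.exp (expect Q f) * (s + r) = s + r := by
      calc Real.exp (expect Q f) * (s + r)
          = Real.exp (expect Q f) * (s * (∑ x, Q x) + r * (∑ x, P2 x)) := by
            rw [hQ1, hP2.2]; ring
        _ = ∑ x, Real.exp (expect Q f) * (s * Q x + r * P2 x) := by
            have hterm : ∀ x, Real.exp (expect Q f) * (s * Q x + r * P2 x)
                = (Real.exp (expect Q f) * s) * Q x + (Real.exp (expect Q f) * r) * P2 x :=
              fun x => by ring
            simp_rw [hterm, Finset.sum_add_distrib, ← Finset.mul_sum]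
            ring
        _ = ∑ x, (s + r) * Q x := Finset.sum_congr rfl fun x _ => hkey x
        _ = s + r := by rw [← Finset.mul_sum, hQ1, mul_one]
    have hE1 : Real.exp (expect Q f) = 1 :=
      mul_right_cancel₀ hsr.ne' (by rw [hsum, one_mul])
    have hQP2 : ∀ x, Q x = P2 x := fun x => by
      have h := hkey x
      rw [hE1, one_mul] at h
      have h2 : r * Q x = r * P2 x := by linarith
      exact mul_left_cancel₀ hr.ne' h2
    apply hne
    funext x
    have h := hQP2 x
    simp only [hQdef, mix] at h
    have h2 : lam * P1 x = lam * P2 x := by linarith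
    exact mul_left_cancel₀ hl.ne' h2
  have hV2 : 0 ≤ varD P2
      (fun x => Real.log ((s + r) * P2 x / (s * Q x + r * P2 x))) :=
    varD_nonneg P2 _ hP2.2 hP2.1
  have h1 := mul_pos hs hV1
  have h2 := mul_nonneg hr.le hV2
  simp only [Vfun, ← hQdef, ← hf]
  linarith

lemma Vfun_continuousOn (P1 P2 : X → ℝ) (hP1pos : ∀ x, 0 < P1 x) (hP2pos : ∀ x, 0 < P2 x)
    {r θ δ : ℝ} (hr : 0 < r) (hθ : 0 < θ) (hδ : 0 ≤ δ) :
    ContinuousOn (fun p : ℝ × ℝ => Vfun P1 P2 r p.1 p.2)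
      (Set.Icc θ (1 - θ) ×ˢ Set.Icc δ 1) := by
  set K : Set (ℝ × ℝ) := Set.Icc θ (1 - θ) ×ˢ Set.Icc δ 1 with hK
  have hmem : ∀ p ∈ K, θ ≤ p.1 ∧ 0 ≤ p.2 ∧ p.2 ≤ 1 := by
    intro p hp
    obtain ⟨h1, h2⟩ := hp
    exact ⟨h1.1, le_trans hδ h2.1, h2.2⟩
  have cmix : ∀ x, Continuous (fun p : ℝ × ℝ => p.2 * P1 x + (1 - p.2) * P2 x) := by
    intro x; fun_prop
  have hmixpos : ∀ p ∈ K, ∀ x, 0 < p.2 * P1 x + (1 - p.2) * P2 x := by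
    intro p hp x
    obtain ⟨_, h2, h3⟩ := hmem p hp
    rcases eq_or_lt_of_le h2 with h | h
    · rw [← h]; simpa using hP2pos x
    · have := mul_pos h (hP1pos x)
      have := mul_nonneg (by linarith : (0:ℝ) ≤ 1 - p.2) (hP2pos x).le
      linarith
  have hdenpos : ∀ p ∈ K, ∀ x, 0 < p.1 * (p.2 * P1 x + (1 - p.2) * P2 x) + r * P2 x := by
    intro p hp x
    have h1 := (hmem p hp).1
    have := mul_nonneg (by linarith : (0:ℝ) ≤ p.1) (hmixpos p hp x).le
    have := mul_pos hr (hP2pos x)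
    linarith
  have cden : ∀ x, Continuous
      (fun p : ℝ × ℝ => p.1 * (p.2 * P1 x + (1 - p.2) * P2 x) + r * P2 x) := by
    intro x; fun_prop
  -- log of the first ratio
  have clog1 : ∀ x, ContinuousOn
      (fun p : ℝ × ℝ => Real.log ((p.1 + r) * (p.2 * P1 x + (1 - p.2) * P2 x) /
        (p.1 * (p.2 * P1 x + (1 - p.2) * P2 x) + r * P2 x))) K := by
    intro x
    have cnum : Continuous (fun p : ℝ × ℝ => (p.1 + r) * (p.2 * P1 x + (1 - p.2) * P2 x)) := by
      fun_prop
    apply ContinuousOn.log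
    · exact ContinuousOn.div cnum.continuousOn (cden x).continuousOn
        (fun p hp => (hdenpos p hp x).ne')
    · intro p hp
      have h1 := (hmem p hp).1
      have harg : 0 < (p.1 + r) * (p.2 * P1 x + (1 - p.2) * P2 x) /
          (p.1 * (p.2 * P1 x + (1 - p.2) * P2 x) + r * P2 x) :=
        div_pos (mul_pos (by linarith) (hmixpos p hp x)) (hdenpos p hp x)
      exact harg.ne'
  have clog2 : ∀ x, ContinuousOn
      (fun p : ℝ × ℝ => Real.log ((p.1 + r) * P2 x /
        (p.1 * (p.2 * P1 x + (1 - p.2) * P2 x) + r * P2 x))) K := by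
    intro x
    have cnum : Continuous (fun p : ℝ × ℝ => (p.1 + r) * P2 x) := by
      fun_prop
    apply ContinuousOn.log
    · exact ContinuousOn.div cnum.continuousOn (cden x).continuousOn
        (fun p hp => (hdenpos p hp x).ne')
    · intro p hp
      have h1 := (hmem p hp).1
      have harg : 0 < (p.1 + r) * P2 x /
          (p.1 * (p.2 * P1 x + (1 - p.2) * P2 x) + r * P2 x) :=
        div_pos (mul_pos (by linarith) (hP2pos x)) (hdenpos p hp x)
      exact harg.ne'
  simp only [Vfun, varD, expect, mix]
  apply ContinuousOn.add
  · apply ContinuousOn.mul continuousOn_fst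
    apply ContinuousOn.sub
    · apply continuousOn_finset_sum
      intro x _
      exact ((cmix x).continuousOn).mul ((clog1 x).pow 2)
    · exact (continuousOn_finset_sum _ fun x _ =>
        ((cmix x).continuousOn).mul (clog1 x)).pow 2
  · apply ContinuousOn.mul continuousOn_const
    apply ContinuousOn.sub
    · apply continuousOn_finset_sum
      intro x _
      exact continuousOn_const.mul ((clog2 x).pow 2)
    · exact (continuousOn_finset_sum _ fun x _ =>
        continuousOn_const.mul (clog2 x)).pow 2

/-- `V(s,λ) > 0` for `s ∈ [θ,1−θ]`, `λ ∈ (0,1]`, and for every `δ ∈ (0,1]`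
there is a uniform positive lower bound on `V(s,λ)` over `s ∈ [θ,1−θ]`, `λ ∈ [δ,1]`. -/
theorem V_pos_and_uniformly_bounded_below [Nonempty X]
    (P1 P2 : X → ℝ) (hP1 : IsProbDist P1) (hP2 : IsProbDist P2)
    (hP1pos : ∀ x, 0 < P1 x) (hP2pos : ∀ x, 0 < P2 x) (hne : P1 ≠ P2)
    {r θ : ℝ} (hr : 0 < r) (hθ : θ ∈ Set.Ioo (0 : ℝ) (1 / 2)) :
    (∀ s ∈ Set.Icc θ (1 - θ), ∀ lam ∈ Set.Ioc (0 : ℝ) 1, 0 < Vfun P1 P2 r s lam) ∧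
    ∀ δ ∈ Set.Ioc (0 : ℝ) 1, ∃ a > 0,
      ∀ s ∈ Set.Icc θ (1 - θ), ∀ lam ∈ Set.Icc δ 1, a ≤ Vfun P1 P2 r s lam := by
  obtain ⟨hθ0, hθ2⟩ := hθ
  constructor
  · intro s hs lam hlam
    exact Vfun_pos P1 P2 hP1 hP2 hP1pos hP2pos hne hr (lt_of_lt_of_le hθ0 hs.1)
      hlam.1 hlam.2
  · intro δ hδ
    have hKc : IsCompact (Set.Icc θ (1 - θ) ×ˢ Set.Icc δ 1) :=
      isCompact_Icc.prod isCompact_Icc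
    have hKne : (Set.Icc θ (1 - θ) ×ˢ Set.Icc δ 1).Nonempty :=
      ⟨(θ, δ), ⟨⟨le_refl θ, by linarith⟩, ⟨le_refl δ, hδ.2⟩⟩⟩
    obtain ⟨p0, hp0, hmin⟩ := hKc.exists_isMinOn hKne
      (Vfun_continuousOn P1 P2 hP1pos hP2pos hr hθ0 hδ.1.le)
    refine ⟨Vfun P1 P2 r p0.1 p0.2, ?_, ?_⟩
    · exact Vfun_pos P1 P2 hP1 hP2 hP1pos hP2pos hne hr
        (lt_of_lt_of_le hθ0 hp0.1.1) (lt_of_lt_of_le hδ.1 hp0.2.1) hp0.2.2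
    · intro s hs lam hlam
      exact isMinOn_iff.mp hmin _ (Set.mk_mem_prod hs hlam)

end StmtNS
end
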